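/- arXiv:2308.09261 — 6 statements merged into one kernel-verified Lean document; each statement's English description precedes it below -/
import Mathlib

section
/- Let B and C be bounded linear operators on H admitting A-adjoints B♯ and C♯. Then (w_{A,e}(B,C))² ≤ (1/√2)·w_A( (B♯B + C♯C) + i(BB♯ + CC♯) ). -/
noncomputable section

open scoped ComplexInnerProductSpace

variable {H : Type*} [NormedAddCommGroup H] [InnerProductSpace ℂ H] [CompleteSpace H]

/-- The semi-inner product induced by a positive operator `A`:
`⟨x,y⟩_A = ⟨Ax,y⟩` (linear in the first argument, following the paper's convention). -/
def innerA (A : H →L[ℂ] H) (x y : H) : ℂ := ⟪y, A x⟫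

/-- The seminorm induced by `A`: `‖x‖_A = ⟨Ax,x⟩^{1/2}`. -/
def normA (A : H →L[ℂ] H) (x : H) : ℝ := Real.sqrt (innerA A x x).re

/-- The `A`-numerical radius `w_A(T) = sup { |⟨Tx,x⟩_A| : ‖x‖_A = 1 }`. -/
def wA (A T : H →L[ℂ] H) : ℝ :=
  sSup {r : ℝ | ∃ x : H, normA A x = 1 ∧ r = ‖innerA A (T x) x‖}

/-- The `A`-Crawford number `c_A(T) = inf { |⟨Tx,x⟩_A| : ‖x‖_A = 1 }`. -/
def cA (A T : H →L[ℂ] H) : ℝ :=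
  sInf {r : ℝ | ∃ x : H, normA A x = 1 ∧ r = ‖innerA A (T x) x‖}

/-- The `A`-operator seminorm `‖T‖_A = sup { ‖Tx‖_A : ‖x‖_A = 1 }`. -/
def opNormA (A T : H →L[ℂ] H) : ℝ :=
  sSup {r : ℝ | ∃ x : H, normA A x = 1 ∧ r = normA A (T x)}

/-- The `A`-Euclidean operator radius of the pair `(B, C)`. -/
def wAe (A B C : H →L[ℂ] H) : ℝ :=
  sSup {r : ℝ | ∃ x : H, normA A x = 1 ∧
    r = Real.sqrt (‖innerA A (B x) x‖^2 + ‖innerA A (C x) x‖^2)}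

/-- The `A`-Euclidean operator seminorm of the pair `(B, C)`. -/
def normAe (A B C : H →L[ℂ] H) : ℝ :=
  sSup {r : ℝ | ∃ x : H, normA A x = 1 ∧
    r = Real.sqrt ((normA A (B x))^2 + (normA A (C x))^2)}

/-- `Re_A(T) = (T + T♯)/2`, where `Ts` is an `A`-adjoint of `T`. -/
def ReA (T Ts : H →L[ℂ] H) : H →L[ℂ] H := (2 : ℂ)⁻¹ • (T + Ts)

/-- `Im_A(T) = (T - T♯)/(2i)`, where `Ts` is an `A`-adjoint of `T`. -/
def ImA (T Ts : H →L[ℂ] H) : H →L[ℂ] H := (2 * Complex.I)⁻¹ • (T - Ts)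

set_option maxHeartbeats 2000000
set_option synthInstance.maxHeartbeats 1000000
set_option linter.unusedSectionVars false

open ContinuousLinearMap in
lemma pow_adj_comm (S P : H →L[ℂ] H) (hP : (S*S) * P = ContinuousLinearMap.adjoint P * (S*S)) :
    ∀ k : ℕ, (S*S) * P^k = ContinuousLinearMap.adjoint (P^k) * (S*S) := by
  intro k
  induction k with
  | zero => simp [← star_eq_adjoint]
  | succ n ih =>
    have : P ^ (n+1) = P ^ n * P := pow_succ P n
    rw [this, ← mul_assoc, ih, mul_assoc, hP, ← mul_assoc, ← star_eq_adjoint, ← star_eq_adjoint,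
      ← star_eq_adjoint, ← star_mul, ← pow_succ, ← pow_succ']

open ContinuousLinearMap in
lemma key_bound (S P : H →L[ℂ] H) (hS : ContinuousLinearMap.adjoint S = S)
    (hP : (S*S) * P = ContinuousLinearMap.adjoint P * (S*S)) (x : H) :
    ‖S (P x)‖ ≤ ‖P‖ * ‖S x‖ := by
  have step : ∀ k : ℕ, ‖S ((P^k) x)‖^2 ≤ ‖S ((P^(2*k)) x)‖ * ‖S x‖ := by
    intro k
    have hmove : ∀ y z : H, (⟪S y, z⟫ : ℂ) = ⟪y, S z⟫ := by
      intro y z; rw [← adjoint_inner_left, hS]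
    have e1 : (⟪S ((P^k) x), S ((P^k) x)⟫ : ℂ) = ⟪S ((P^(2*k)) x), S x⟫ := by
      calc (⟪S ((P^k) x), S ((P^k) x)⟫ : ℂ)
          = ⟪(P^k) x, S (S ((P^k) x))⟫ := hmove _ _
        _ = ⟪(P^k) x, ((S*S) * P^k) x⟫ := rfl
        _ = ⟪(P^k) x, (ContinuousLinearMap.adjoint (P^k) * (S*S)) x⟫ := by
            rw [pow_adj_comm S P hP k]
        _ = ⟪(P^k) x, ContinuousLinearMap.adjoint (P^k) ((S*S) x)⟫ := rfl
        _ = ⟪(P^k) ((P^k) x), (S*S) x⟫ := adjoint_inner_right _ _ _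
        _ = ⟪(P^(2*k)) x, S (S x)⟫ := by rw [two_mul, pow_add]; rfl
        _ = ⟪S ((P^(2*k)) x), S x⟫ := (hmove _ _).symm
    have hni := norm_inner_le_norm (𝕜 := ℂ) (S ((P^(2*k)) x)) (S x)
    calc ‖S ((P^k) x)‖^2 = RCLike.re (⟪S ((P^k) x), S ((P^k) x)⟫ : ℂ) :=
          (inner_self_eq_norm_sq _).symm
      _ = RCLike.re (⟪S ((P^(2*k)) x), S x⟫ : ℂ) := by rw [e1]
      _ ≤ ‖(⟪S ((P^(2*k)) x), S x⟫ : ℂ)‖ := RCLike.re_le_norm _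
      _ ≤ ‖S ((P^(2*k)) x)‖ * ‖S x‖ := hni
  by_cases hx : ‖S x‖ = 0
  · have h2 := step 1
    rw [pow_one, hx, mul_zero] at h2
    have : ‖S (P x)‖ = 0 := by nlinarith [norm_nonneg (S (P x))]
    rw [this, hx, mul_zero]
  have hxpos : 0 < ‖S x‖ := lt_of_le_of_ne (norm_nonneg _) (Ne.symm hx)
  have claim : ∀ n : ℕ, ‖S (P x)‖^(2^n) * ‖S x‖ ≤ ‖S ((P^(2^n)) x)‖ * ‖S x‖^(2^n) := by
    intro n
    induction n with
    | zero => simp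
    | succ n ih =>
      have hstep := step (2^n)
      have h2 : (2:ℕ) * 2^n = 2^(n+1) := by ring
      rw [h2] at hstep
      have hnn1 : (0:ℝ) ≤ ‖S (P x)‖^(2^n) * ‖S x‖ := by positivity
      have hsq := mul_self_le_mul_self hnn1 ih
      have key2 : ‖S (P x)‖^(2^(n+1)) * ‖S x‖ * ‖S x‖ ≤
          ‖S ((P^(2^(n+1))) x)‖ * ‖S x‖^(2^(n+1)) * ‖S x‖ := by
        have e : ‖S (P x)‖^(2^(n+1)) * ‖S x‖ * ‖S x‖
            = (‖S (P x)‖^(2^n) * ‖S x‖) * (‖S (P x)‖^(2^n) * ‖S x‖) := by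
          rw [pow_succ, pow_mul]; ring
        rw [e]
        calc (‖S (P x)‖^(2^n) * ‖S x‖) * (‖S (P x)‖^(2^n) * ‖S x‖)
            ≤ (‖S ((P^(2^n)) x)‖ * ‖S x‖^(2^n)) * (‖S ((P^(2^n)) x)‖ * ‖S x‖^(2^n)) := hsq
          _ = ‖S ((P^(2^n)) x)‖^2 * (‖S x‖^(2^n) * ‖S x‖^(2^n)) := by ring
          _ ≤ (‖S ((P^(2^(n+1))) x)‖ * ‖S x‖) * (‖S x‖^(2^n) * ‖S x‖^(2^n)) := by
              apply mul_le_mul_of_nonneg_right hstep; positivity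
          _ = ‖S ((P^(2^(n+1))) x)‖ * ‖S x‖^(2^(n+1)) * ‖S x‖ := by
              rw [pow_succ, pow_mul]; ring
      exact le_of_mul_le_mul_right key2 hxpos
  have fb : ∀ n : ℕ, ‖S ((P^(2^n)) x)‖ ≤ ‖S‖ * ‖P‖^(2^n) * ‖x‖ := by
    intro n
    calc ‖S ((P^(2^n)) x)‖ ≤ ‖S‖ * ‖(P^(2^n)) x‖ := le_opNorm _ _
      _ ≤ ‖S‖ * (‖P^(2^n)‖ * ‖x‖) := by
          apply mul_le_mul_of_nonneg_left (le_opNorm _ _) (norm_nonneg _)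
      _ ≤ ‖S‖ * (‖P‖^(2^n) * ‖x‖) := by
          apply mul_le_mul_of_nonneg_left _ (norm_nonneg _)
          exact mul_le_mul_of_nonneg_right
            (norm_pow_le' P ((by positivity))) (norm_nonneg _)
      _ = ‖S‖ * ‖P‖^(2^n) * ‖x‖ := by ring
  by_contra hcon
  push_neg at hcon
  have hPpos : 0 < ‖P‖ := by
    rcases (norm_nonneg P).lt_or_eq with h | h
    · exact h
    · exfalso
      have : P = 0 := by rwa [eq_comm, norm_eq_zero] at h
      rw [this] at hcon
      simp at hcon
  set M := ‖P‖ * ‖S x‖ with hM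
  have hMpos : 0 < M := mul_pos hPpos hxpos
  set q := ‖S (P x)‖ / M with hq
  have hq1 : 1 < q := (one_lt_div hMpos).2 hcon
  set c := ‖S‖ * ‖x‖ / ‖S x‖ with hc
  have hqn : ∀ n : ℕ, q^(2^n) ≤ c := by
    intro n
    rw [hq, div_pow, div_le_iff₀ (pow_pos hMpos _), hc, hM, mul_pow,
      div_mul_eq_mul_div, le_div_iff₀ hxpos]
    calc ‖S (P x)‖^(2^n) * ‖S x‖ ≤ ‖S ((P^(2^n)) x)‖ * ‖S x‖^(2^n) := claim n
      _ ≤ (‖S‖ * ‖P‖^(2^n) * ‖x‖) * ‖S x‖^(2^n) := by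
          apply mul_le_mul_of_nonneg_right (fb n); positivity
      _ = ‖S‖ * ‖x‖ * (‖P‖^(2^n) * ‖S x‖^(2^n)) := by ring
  obtain ⟨n, hn⟩ := pow_unbounded_of_one_lt c hq1
  have : q^n ≤ q^(2^n) := pow_le_pow_right₀ hq1.le (Nat.lt_two_pow_self (n := n)).le
  linarith [hqn n]

open ContinuousLinearMap in
lemma sq_norm_bound (S G P : H →L[ℂ] H) (hS : ContinuousLinearMap.adjoint S = S)
    (h1 : (S*S) * P = ContinuousLinearMap.adjoint P * (S*S))
    (h2 : ContinuousLinearMap.adjoint G * ((S*S) * G) = (S*S) * P) (x : H) :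
    ‖S (G x)‖^2 ≤ ‖P‖ * ‖S x‖^2 := by
  have hmove : ∀ y z : H, (⟪S y, z⟫ : ℂ) = ⟪y, S z⟫ := by
    intro y z; rw [← adjoint_inner_left, hS]
  have e1 : (⟪S (G x), S (G x)⟫ : ℂ) = ⟪S x, S (P x)⟫ := by
    calc (⟪S (G x), S (G x)⟫ : ℂ)
        = ⟪G x, S (S (G x))⟫ := hmove _ _
      _ = ⟪G x, ((S*S) * G) x⟫ := rfl
      _ = ⟪x, ContinuousLinearMap.adjoint G (((S*S) * G) x)⟫ := (adjoint_inner_right _ _ _).symm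
      _ = ⟪x, (ContinuousLinearMap.adjoint G * ((S*S) * G)) x⟫ := rfl
      _ = ⟪x, ((S*S) * P) x⟫ := by rw [h2]
      _ = ⟪x, S (S (P x))⟫ := rfl
      _ = ⟪S x, S (P x)⟫ := (hmove _ _).symm
  calc ‖S (G x)‖^2 = RCLike.re (⟪S (G x), S (G x)⟫ : ℂ) := (inner_self_eq_norm_sq _).symm
    _ = RCLike.re (⟪S x, S (P x)⟫ : ℂ) := by rw [e1]
    _ ≤ ‖(⟪S x, S (P x)⟫ : ℂ)‖ := RCLike.re_le_norm _
    _ ≤ ‖S x‖ * ‖S (P x)‖ := norm_inner_le_norm _ _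
    _ ≤ ‖S x‖ * (‖P‖ * ‖S x‖) := mul_le_mul_of_nonneg_left (key_bound S P hS h1 x) (norm_nonneg _)
    _ = ‖P‖ * ‖S x‖^2 := by ring

open ContinuousLinearMap in
lemma rel_pack (A X Xs : H →L[ℂ] H) (hAsa : ContinuousLinearMap.adjoint A = A)
    (hX : A * Xs = ContinuousLinearMap.adjoint X * A) :
    (A * (Xs * X) = ContinuousLinearMap.adjoint (Xs * X) * A) ∧
    (A * (X * Xs) = ContinuousLinearMap.adjoint (X * Xs) * A) ∧
    (ContinuousLinearMap.adjoint X * (A * X) = A * (Xs * X)) ∧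
    (ContinuousLinearMap.adjoint Xs * (A * Xs) = A * (X * Xs)) := by
  have hXsA : ContinuousLinearMap.adjoint Xs * A = A * X := by
    calc ContinuousLinearMap.adjoint Xs * A
        = star Xs * star A := by rw [star_eq_adjoint, star_eq_adjoint, hAsa]
      _ = star (A * Xs) := (star_mul _ _).symm
      _ = star (ContinuousLinearMap.adjoint X * A) := by rw [hX]
      _ = star A * star (ContinuousLinearMap.adjoint X) := star_mul _ _
      _ = A * X := by rw [star_eq_adjoint, hAsa, star_eq_adjoint, adjoint_adjoint]
  have hadj1 : ContinuousLinearMap.adjoint (Xs * X)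
      = ContinuousLinearMap.adjoint X * ContinuousLinearMap.adjoint Xs := by
    rw [← star_eq_adjoint, star_mul, star_eq_adjoint, star_eq_adjoint]
  have hadj2 : ContinuousLinearMap.adjoint (X * Xs)
      = ContinuousLinearMap.adjoint Xs * ContinuousLinearMap.adjoint X := by
    rw [← star_eq_adjoint, star_mul, star_eq_adjoint, star_eq_adjoint]
  have h3 : ContinuousLinearMap.adjoint X * (A * X) = A * (Xs * X) := by
    calc ContinuousLinearMap.adjoint X * (A * X)
        = (ContinuousLinearMap.adjoint X * A) * X := (mul_assoc _ _ _).symm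
      _ = (A * Xs) * X := by rw [← hX]
      _ = A * (Xs * X) := mul_assoc _ _ _
  have h4 : ContinuousLinearMap.adjoint Xs * (A * Xs) = A * (X * Xs) := by
    calc ContinuousLinearMap.adjoint Xs * (A * Xs)
        = (ContinuousLinearMap.adjoint Xs * A) * Xs := (mul_assoc _ _ _).symm
      _ = (A * X) * Xs := by rw [hXsA]
      _ = A * (X * Xs) := mul_assoc _ _ _
  refine ⟨?_, ?_, h3, h4⟩
  · rw [hadj1]
    calc A * (Xs * X) = (ContinuousLinearMap.adjoint X) * (A * X) := h3.symm
      _ = ContinuousLinearMap.adjoint X * (ContinuousLinearMap.adjoint Xs * A) := by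
          rw [← hXsA]
      _ = ContinuousLinearMap.adjoint X * ContinuousLinearMap.adjoint Xs * A :=
          (mul_assoc _ _ _).symm
  · rw [hadj2]
    calc A * (X * Xs) = (ContinuousLinearMap.adjoint Xs) * (A * Xs) := h4.symm
      _ = ContinuousLinearMap.adjoint Xs * (ContinuousLinearMap.adjoint X * A) := by
          rw [hX]
      _ = ContinuousLinearMap.adjoint Xs * ContinuousLinearMap.adjoint X * A :=
          (mul_assoc _ _ _).symm

open ContinuousLinearMap in
lemma val_eq (A S X Xs : H →L[ℂ] H) (hSS : S * S = A)
    (hSsa : ContinuousLinearMap.adjoint S = S)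
    (h : ContinuousLinearMap.adjoint X * (A * X) = A * (Xs * X)) (x : H) :
    innerA A ((Xs * X) x) x = ((‖S (X x)‖^2 : ℝ) : ℂ) := by
  have hmove : ∀ y z : H, (⟪S y, z⟫ : ℂ) = ⟪y, S z⟫ := by
    intro y z; rw [← adjoint_inner_left, hSsa]
  have : innerA A ((Xs * X) x) x = ⟪x, (A * (Xs * X)) x⟫ := rfl
  rw [this, ← h]
  calc (⟪x, (ContinuousLinearMap.adjoint X * (A * X)) x⟫ : ℂ)
      = ⟪x, ContinuousLinearMap.adjoint X ((A * X) x)⟫ := rfl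
    _ = ⟪X x, (A * X) x⟫ := adjoint_inner_right _ _ _
    _ = ⟪X x, A (X x)⟫ := rfl
    _ = ⟪X x, S (S (X x))⟫ := by rw [← hSS]; rfl
    _ = ⟪S (X x), S (X x)⟫ := (hmove _ _).symm
    _ = ((‖S (X x)‖ : ℂ))^2 := inner_self_eq_norm_sq_to_K _
    _ = ((‖S (X x)‖^2 : ℝ) : ℂ) := by push_cast; ring

open ContinuousLinearMap in
lemma conj_eq (A X Xs : H →L[ℂ] H) (hAsa : ContinuousLinearMap.adjoint A = A)
    (hX : A * Xs = ContinuousLinearMap.adjoint X * A) (x : H) :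
    innerA A (Xs x) x = starRingEnd ℂ (innerA A (X x) x) := by
  have h1 : innerA A (Xs x) x = ⟪X x, A x⟫ := by
    calc innerA A (Xs x) x = ⟪x, (A * Xs) x⟫ := rfl
      _ = ⟪x, (ContinuousLinearMap.adjoint X * A) x⟫ := by rw [hX]
      _ = ⟪x, ContinuousLinearMap.adjoint X (A x)⟫ := rfl
      _ = ⟪X x, A x⟫ := adjoint_inner_right _ _ _
  have h2 : starRingEnd ℂ (innerA A (X x) x) = ⟪A (X x), x⟫ := by
    rw [innerA, inner_conj_symm]
  rw [h1, h2, ← hAsa, adjoint_inner_left, hAsa]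

theorem stmt1 (A : H →L[ℂ] H) (hA : A.IsPositive) (hA0 : A ≠ 0)
    (B C Bs Cs : H →L[ℂ] H)
    (hB : A.comp Bs = (ContinuousLinearMap.adjoint B).comp A)
    (hC : A.comp Cs = (ContinuousLinearMap.adjoint C).comp A) :
    (wAe A B C)^2
      ≤ (Real.sqrt 2)⁻¹ * wA A ((Bs * B + Cs * C) + Complex.I • (B * Bs + C * Cs)) := by
  set T : H →L[ℂ] H := (Bs * B + Cs * C) + Complex.I • (B * Bs + C * Cs) with hT
  have h0 : (0 : H →L[ℂ] H) ≤ A := (ContinuousLinearMap.nonneg_iff_isPositive A).2 hA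
  set S := CFC.sqrt A with hSdef
  have hSS : S * S = A := CFC.sqrt_mul_sqrt_self A h0
  have hSsa : ContinuousLinearMap.adjoint S = S :=
    (((ContinuousLinearMap.nonneg_iff_isPositive S).1 (CFC.sqrt_nonneg A)).isSelfAdjoint).adjoint_eq
  have hAsa : ContinuousLinearMap.adjoint A = A := hA.isSelfAdjoint.adjoint_eq
  have hmove : ∀ y z : H, (⟪S y, z⟫ : ℂ) = ⟪y, S z⟫ := by
    intro y z; rw [← ContinuousLinearMap.adjoint_inner_left, hSsa]
  have hinner : ∀ x y : H, innerA A x y = ⟪S y, S x⟫ := by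
    intro x y
    have hAx : A x = S (S x) := by rw [← hSS]; rfl
    rw [innerA, hAx, ← hmove]
  have hnorm : ∀ x : H, normA A x = ‖S x‖ := by
    intro x
    have : innerA A x x = ((‖S x‖ : ℝ) : ℂ)^2 := by
      rw [hinner]; exact inner_self_eq_norm_sq_to_K _
    rw [normA, this, ← Complex.ofReal_pow, Complex.ofReal_re, Real.sqrt_sq (norm_nonneg _)]
  have hB' : A * Bs = ContinuousLinearMap.adjoint B * A := hB
  have hC' : A * Cs = ContinuousLinearMap.adjoint C * A := hC
  obtain ⟨hPB, hQB, hB3, hB4⟩ := rel_pack A B Bs hAsa hB'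
  obtain ⟨hPC, hQC, hC3, hC4⟩ := rel_pack A C Cs hAsa hC'
  -- squared-norm bounds
  have hSSsub : ∀ P : H →L[ℂ] H, A * P = ContinuousLinearMap.adjoint P * A →
      (S*S) * P = ContinuousLinearMap.adjoint P * (S*S) := by
    intro P hP; rw [hSS]; exact hP
  have bB : ∀ x : H, ‖S (B x)‖^2 ≤ ‖Bs * B‖ * ‖S x‖^2 := by
    intro x
    refine sq_norm_bound S B (Bs * B) hSsa (hSSsub _ hPB) ?_ x
    rw [hSS]; exact hB3
  have bC : ∀ x : H, ‖S (C x)‖^2 ≤ ‖Cs * C‖ * ‖S x‖^2 := by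
    intro x
    refine sq_norm_bound S C (Cs * C) hSsa (hSSsub _ hPC) ?_ x
    rw [hSS]; exact hC3
  have bBs : ∀ x : H, ‖S (Bs x)‖^2 ≤ ‖B * Bs‖ * ‖S x‖^2 := by
    intro x
    refine sq_norm_bound S Bs (B * Bs) hSsa (hSSsub _ hQB) ?_ x
    rw [hSS]; exact hB4
  have bCs : ∀ x : H, ‖S (Cs x)‖^2 ≤ ‖C * Cs‖ * ‖S x‖^2 := by
    intro x
    refine sq_norm_bound S Cs (C * Cs) hSsa (hSSsub _ hQC) ?_ x
    rw [hSS]; exact hC4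
  -- values
  set p : H → ℝ := fun x => ‖S (B x)‖^2 + ‖S (C x)‖^2 with hp
  set q : H → ℝ := fun x => ‖S (Bs x)‖^2 + ‖S (Cs x)‖^2 with hq
  have hadd : ∀ y z x : H, innerA A (y + z) x = innerA A y x + innerA A z x := by
    intro y z x; simp [innerA, inner_add_right]
  have hsmul : ∀ (c : ℂ) (y x : H), innerA A (c • y) x = c * innerA A y x := by
    intro c y x; simp [innerA, inner_smul_right]
  have hTval : ∀ x : H, innerA A (T x) x = ((p x : ℝ) : ℂ) + Complex.I * ((q x : ℝ) : ℂ) := by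
    intro x
    have hTx : T x = ((Bs*B) x + (Cs*C) x) + Complex.I • ((B*Bs) x + (C*Cs) x) := by
      simp [hT, ContinuousLinearMap.add_apply, ContinuousLinearMap.smul_apply]
    rw [hTx, hadd, hadd, hsmul, hadd,
      val_eq A S B Bs hSS hSsa hB3 x, val_eq A S C Cs hSS hSsa hC3 x,
      val_eq A S Bs B hSS hSsa hB4 x, val_eq A S Cs C hSS hSsa hC4 x]
    simp only [hp, hq]
    push_cast
    ring
  have habsT : ∀ x : H, ‖innerA A (T x) x‖ = Real.sqrt ((p x)^2 + (q x)^2) := by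
    intro x
    have hre : (innerA A (T x) x).re = p x := by
      rw [hTval x]; simp
    have him : (innerA A (T x) x).im = q x := by
      rw [hTval x]; simp
    rw [Complex.norm_def, Complex.normSq_apply, hre, him]
    congr 1; ring
  -- a unit vector exists
  have hSne : S ≠ 0 := by
    intro h
    exact hA0 (by rw [← hSS, h, mul_zero])
  obtain ⟨y, hy⟩ : ∃ y : H, S y ≠ 0 := by
    by_contra hcon
    push_neg at hcon
    exact hSne (ContinuousLinearMap.ext fun y => by rw [hcon y]; rfl)
  have hx0 : ∃ x : H, normA A x = 1 := by
    refine ⟨((‖S y‖ : ℂ))⁻¹ • y, ?_⟩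
    rw [hnorm, map_smul, norm_smul]
    have hne : ‖S y‖ ≠ 0 := norm_ne_zero_iff.2 hy
    simp [hne]
  obtain ⟨x₀, hx₀⟩ := hx0
  -- wA is an upper bound
  have hbddWA : BddAbove {r : ℝ | ∃ x : H, normA A x = 1 ∧
      r = ‖innerA A (T x) x‖} := by
    refine ⟨(‖Bs * B‖ + ‖Cs * C‖) + (‖B * Bs‖ + ‖C * Cs‖), ?_⟩
    rintro r ⟨x, hx, rfl⟩
    have hx1 : ‖S x‖ = 1 := by rw [← hnorm]; exact hx
    have hpb : p x ≤ ‖Bs * B‖ + ‖Cs * C‖ := by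
      have h1 := bB x; have h2 := bC x
      rw [hx1] at h1 h2
      simp only [hp, one_pow, mul_one] at h1 h2 ⊢
      linarith
    have hqb : q x ≤ ‖B * Bs‖ + ‖C * Cs‖ := by
      have h1 := bBs x; have h2 := bCs x
      rw [hx1] at h1 h2
      simp only [hq, one_pow, mul_one] at h1 h2 ⊢
      linarith
    have hp0 : 0 ≤ p x := by positivity
    have hq0 : 0 ≤ q x := by positivity
    rw [habsT x]
    calc Real.sqrt ((p x)^2 + (q x)^2) ≤ Real.sqrt ((p x + q x)^2) := by
          apply Real.sqrt_le_sqrt; nlinarith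
      _ = p x + q x := Real.sqrt_sq (by linarith)
      _ ≤ (‖Bs * B‖ + ‖Cs * C‖) + (‖B * Bs‖ + ‖C * Cs‖) := by linarith
  have hwle : ∀ x : H, normA A x = 1 →
      ‖innerA A (T x) x‖ ≤ wA A T := by
    intro x hx
    exact le_csSup hbddWA ⟨x, hx, rfl⟩
  have hw0 : 0 ≤ wA A T := le_trans (norm_nonneg _) (hwle x₀ hx₀)
  set M : ℝ := (Real.sqrt 2)⁻¹ * wA A T with hM
  have hM0 : 0 ≤ M := by positivity
  -- the key per-vector estimate
  have hkey : ∀ x : H, normA A x = 1 →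
      (‖innerA A (B x) x‖)^2 + (‖innerA A (C x) x‖)^2 ≤ M := by
    intro x hx
    have hx1 : ‖S x‖ = 1 := by rw [← hnorm]; exact hx
    set b := ‖innerA A (B x) x‖ with hb
    set c := ‖innerA A (C x) x‖ with hc
    have hb0 : 0 ≤ b := norm_nonneg _
    have hc0 : 0 ≤ c := norm_nonneg _
    have cs : ∀ G : H →L[ℂ] H, ‖innerA A (G x) x‖ ≤ ‖S (G x)‖ := by
      intro G
      rw [hinner]
      calc ‖(⟪S x, S (G x)⟫ : ℂ)‖ = ‖(⟪S x, S (G x)⟫ : ℂ)‖ := rfl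
        _ ≤ ‖S x‖ * ‖S (G x)‖ := norm_inner_le_norm _ _
        _ = ‖S (G x)‖ := by rw [hx1, one_mul]
    have hb1 : b^2 ≤ ‖S (B x)‖^2 := pow_le_pow_left₀ hb0 (cs B) 2
    have hc1 : c^2 ≤ ‖S (C x)‖^2 := pow_le_pow_left₀ hc0 (cs C) 2
    have hb2 : b^2 ≤ ‖S (Bs x)‖^2 := by
      have : b = ‖innerA A (Bs x) x‖ := by
        rw [conj_eq A B Bs hAsa hB' x, Complex.norm_conj]
      rw [this]
      exact pow_le_pow_left₀ (norm_nonneg _) (cs Bs) 2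
    have hc2 : c^2 ≤ ‖S (Cs x)‖^2 := by
      have : c = ‖innerA A (Cs x) x‖ := by
        rw [conj_eq A C Cs hAsa hC' x, Complex.norm_conj]
      rw [this]
      exact pow_le_pow_left₀ (norm_nonneg _) (cs Cs) 2
    have hple : b^2 + c^2 ≤ p x := by simp only [hp]; linarith
    have hqle : b^2 + c^2 ≤ q x := by simp only [hq]; linarith
    have hbc0 : 0 ≤ b^2 + c^2 := by positivity
    have hs2 : (0:ℝ) < Real.sqrt 2 := by positivity
    have hstep : Real.sqrt 2 * (b^2 + c^2) ≤ Real.sqrt ((p x)^2 + (q x)^2) := by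
      rw [Real.le_sqrt (by positivity) (by positivity)]
      have : (Real.sqrt 2 * (b^2 + c^2))^2 = 2 * (b^2 + c^2)^2 := by
        rw [mul_pow, Real.sq_sqrt (by norm_num : (0:ℝ) ≤ 2)]
      rw [this]
      nlinarith
    calc b^2 + c^2 = (Real.sqrt 2)⁻¹ * (Real.sqrt 2 * (b^2 + c^2)) := by
          field_simp
      _ ≤ (Real.sqrt 2)⁻¹ * Real.sqrt ((p x)^2 + (q x)^2) :=
          mul_le_mul_of_nonneg_left hstep (by positivity)
      _ = (Real.sqrt 2)⁻¹ * ‖innerA A (T x) x‖ := by rw [habsT x]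
      _ ≤ M := mul_le_mul_of_nonneg_left (hwle x hx) (by positivity)
  -- conclude
  have hEbound : ∀ r ∈ {r : ℝ | ∃ x : H, normA A x = 1 ∧
      r = Real.sqrt ((‖innerA A (B x) x‖)^2 + (‖innerA A (C x) x‖)^2)},
      r ≤ Real.sqrt M := by
    rintro r ⟨x, hx, rfl⟩
    exact Real.sqrt_le_sqrt (hkey x hx)
  have hEne : {r : ℝ | ∃ x : H, normA A x = 1 ∧
      r = Real.sqrt ((‖innerA A (B x) x‖)^2
        + (‖innerA A (C x) x‖)^2)}.Nonempty := ⟨_, x₀, hx₀, rfl⟩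
  have h1 : wAe A B C ≤ Real.sqrt M := csSup_le hEne hEbound
  have h2 : 0 ≤ wAe A B C := by
    have helt : Real.sqrt ((‖innerA A (B x₀) x₀‖)^2
        + (‖innerA A (C x₀) x₀‖)^2) ∈ {r : ℝ | ∃ x : H, normA A x = 1 ∧
        r = Real.sqrt ((‖innerA A (B x) x‖)^2
          + (‖innerA A (C x) x‖)^2)} := ⟨x₀, hx₀, rfl⟩
    have := le_csSup ⟨Real.sqrt M, hEbound⟩ helt
    exact le_trans (Real.sqrt_nonneg _) this
  calc (wAe A B C)^2 ≤ (Real.sqrt M)^2 := pow_le_pow_left₀ h2 h1 2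
    _ = M := Real.sq_sqrt hM0
end
end

section
/- Let T be a bounded linear operator on H admitting an A-adjoint T♯. Then (1/2)·‖Re_A(T²)‖_A + (1/2)·w_A(T)·| ‖Re_A(T)‖_A − ‖Im_A(T)‖_A | ≤ (w_A(T))². -/
noncomputable section

open scoped ComplexInnerProductSpace

variable {H : Type*} [NormedAddCommGroup H] [InnerProductSpace ℂ H] [CompleteSpace H]

open ContinuousLinearMap

namespace Stmt4Aux

lemma inner_A_eq {A B : H →L[ℂ] H} (hB : IsSelfAdjoint B) (hBB : B * B = A)
    (x y : H) : ⟪y, A x⟫ = ⟪B y, B x⟫ := by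
  rw [← hBB, ContinuousLinearMap.mul_apply, ← adjoint_inner_right, hB.adjoint_eq]

lemma norm_B_sq {A B : H →L[ℂ] H} (hB : IsSelfAdjoint B) (hBB : B * B = A)
    (x : H) : ‖B x‖ ^ 2 = (⟪x, A x⟫).re := by
  rw [inner_A_eq hB hBB]
  simpa using (inner_self_eq_norm_sq (𝕜 := ℂ) (B x)).symm

/-- powers of an A-selfadjoint operator are A-selfadjoint -/
lemma pow_asa {A S : H →L[ℂ] H} (hS : A * S = star S * A) (n : ℕ) :
    A * S ^ n = star (S ^ n) * A := by
  induction n with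
  | zero => simp
  | succ n ih =>
    rw [pow_succ, ← mul_assoc, ih, mul_assoc, hS, ← mul_assoc, star_mul, star_pow,
      ← pow_succ, pow_succ']


lemma key {A B : H →L[ℂ] H} (hB : IsSelfAdjoint B) (hBB : B * B = A) (hA0 : A ≠ 0)
    {S : H →L[ℂ] H} (hS : A * S = star S * A) {x : H} (hx : ‖B x‖ = 1) :
    ‖(⟪x, A (S x)⟫ : ℂ)‖ ≤ ‖S‖ := by
  have hxne : x ≠ 0 := by
    rintro rfl; simp at hx
  have hcpos : 0 < ‖A‖ * ‖x‖ ^ 2 := by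
    have h1 : 0 < ‖A‖ := norm_pos_iff.2 hA0
    have h2 : 0 < ‖x‖ := norm_pos_iff.2 hxne
    positivity
  set c : ℝ := ‖A‖ * ‖x‖ ^ 2 with hc
  set u : ℕ → ℝ := fun n => ‖(⟪x, A ((S ^ 2 ^ n) x)⟫ : ℂ)‖ with hu
  have hun : ∀ n, 0 ≤ u n := fun n => norm_nonneg _
  have hstep : ∀ n, u n ^ 2 ≤ u (n + 1) := by
    intro n
    set V := S ^ 2 ^ n with hV
    have hVsa : A * V = star V * A := pow_asa hS _
    have h2 : u n ≤ ‖B (V x)‖ := by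
      calc u n = ‖(⟪B x, B (V x)⟫ : ℂ)‖ := by rw [hu]; simp only []; rw [inner_A_eq hB hBB]
        _ ≤ ‖B x‖ * ‖B (V x)‖ := norm_inner_le_norm _ _
        _ = ‖B (V x)‖ := by rw [hx, one_mul]
    have h3 : ‖B (V x)‖ ^ 2 = (⟪x, A ((V * V) x)⟫).re := by
      rw [norm_B_sq hB hBB]
      congr 1
      have : A (V x) = (star V) (A x) := by
        have := congrArg (fun (W : H →L[ℂ] H) => W x) hVsa
        simpa [mul_apply] using this
      calc ⟪V x, A (V x)⟫ = ⟪x, (adjoint V) (A (V x))⟫ := (adjoint_inner_right V _ _).symm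
        _ = ⟪x, ((star V * A * V)) x⟫ := by rw [← star_eq_adjoint]; simp [mul_apply]
        _ = ⟪x, A ((V * V) x)⟫ := by rw [← hVsa]; simp [mul_apply]
    have h4 : (⟪x, A ((V * V) x)⟫).re ≤ u (n + 1) := by
      have hVV : V * V = S ^ 2 ^ (n + 1) := by
        rw [hV, ← pow_add]
        congr 1
        ring
      rw [hVV]
      exact Complex.re_le_norm _
    calc u n ^ 2 ≤ ‖B (V x)‖ ^ 2 := by
          have := hun n; nlinarith
      _ ≤ u (n + 1) := h3 ▸ h4
  have hgrow : ∀ n, u n ≤ c * ‖S‖ ^ 2 ^ n := by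
    intro n
    have h1 : u n ≤ ‖x‖ * ‖A ((S ^ 2 ^ n) x)‖ := norm_inner_le_norm _ _
    have h2 : ‖A ((S ^ 2 ^ n) x)‖ ≤ ‖A‖ * (‖S‖ ^ 2 ^ n * ‖x‖) := by
      calc ‖A ((S ^ 2 ^ n) x)‖ ≤ ‖A‖ * ‖(S ^ 2 ^ n) x‖ := A.le_opNorm _
        _ ≤ ‖A‖ * (‖S ^ 2 ^ n‖ * ‖x‖) :=
            mul_le_mul_of_nonneg_left ((S ^ 2 ^ n).le_opNorm x) (norm_nonneg A)
        _ ≤ ‖A‖ * (‖S‖ ^ 2 ^ n * ‖x‖) :=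
            mul_le_mul_of_nonneg_left
              (mul_le_mul_of_nonneg_right
                (norm_pow_le' S (Nat.pos_of_ne_zero (by positivity))) (norm_nonneg x))
              (norm_nonneg A)
    have hxn := norm_nonneg x
    calc u n ≤ ‖x‖ * (‖A‖ * (‖S‖ ^ 2 ^ n * ‖x‖)) :=
          h1.trans (mul_le_mul_of_nonneg_left h2 hxn)
      _ = c * ‖S‖ ^ 2 ^ n := by rw [hc]; ring
  have hiter : ∀ n, u 0 ≤ u n ^ (((2 : ℝ) ^ n)⁻¹) := by
    intro n
    induction n with
    | zero => simp
    | succ n ih =>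
      have h1 : u n ≤ u (n + 1) ^ ((2 : ℝ)⁻¹) := by
        rw [show ((2 : ℝ)⁻¹) = ((1 : ℝ)/2) by norm_num, ← Real.sqrt_eq_rpow]
        exact (Real.le_sqrt (hun n) (hun (n+1))).2 (hstep n)
      calc u 0 ≤ u n ^ (((2 : ℝ) ^ n)⁻¹) := ih
        _ ≤ (u (n + 1) ^ ((2 : ℝ)⁻¹)) ^ (((2 : ℝ) ^ n)⁻¹) :=
            Real.rpow_le_rpow (hun n) h1 (by positivity)
        _ = u (n + 1) ^ (((2 : ℝ) ^ (n + 1))⁻¹) := by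
            rw [← Real.rpow_mul (hun (n + 1))]
            congr 1
            rw [pow_succ]
            field_simp
  have hfinal : ∀ n, u 0 ≤ c ^ (((2 : ℝ) ^ n)⁻¹) * ‖S‖ := by
    intro n
    have he : (0 : ℝ) ≤ ((2 : ℝ) ^ n)⁻¹ := by positivity
    calc u 0 ≤ u n ^ (((2 : ℝ) ^ n)⁻¹) := hiter n
      _ ≤ (c * ‖S‖ ^ 2 ^ n) ^ (((2 : ℝ) ^ n)⁻¹) :=
          Real.rpow_le_rpow (hun n) (hgrow n) he
      _ = c ^ (((2 : ℝ) ^ n)⁻¹) * (‖S‖ ^ (2 ^ n : ℕ)) ^ (((2 : ℝ) ^ n)⁻¹) :=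
          Real.mul_rpow hcpos.le (by positivity)
      _ = c ^ (((2 : ℝ) ^ n)⁻¹) * ‖S‖ := by
          congr 1
          rw [← Real.rpow_natCast ‖S‖ (2 ^ n), ← Real.rpow_mul (norm_nonneg S)]
          rw [show (((2 ^ n : ℕ) : ℝ)) = (2 : ℝ) ^ n by push_cast; ring]
          rw [mul_inv_cancel₀ (by positivity), Real.rpow_one]
  have hlim : Filter.Tendsto (fun n : ℕ => c ^ (((2 : ℝ) ^ n)⁻¹) * ‖S‖)
      Filter.atTop (nhds (1 * ‖S‖)) := by
    apply Filter.Tendsto.mul_const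
    have he : Filter.Tendsto (fun n : ℕ => ((2 : ℝ) ^ n)⁻¹) Filter.atTop (nhds 0) := by
      simpa [inv_pow] using
        tendsto_pow_atTop_nhds_zero_of_lt_one (by norm_num : (0:ℝ) ≤ 2⁻¹) (by norm_num)
    have : Filter.Tendsto (fun n : ℕ => Real.exp (Real.log c * (((2 : ℝ) ^ n)⁻¹)))
        Filter.atTop (nhds (Real.exp (Real.log c * 0))) :=
      (Real.continuous_exp.tendsto _).comp (he.const_mul _)
    simpa [Real.rpow_def_of_pos hcpos, Real.exp_zero] using this
  have := ge_of_tendsto' hlim hfinal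
  simpa [hu] using this


lemma Bzero {A B : H →L[ℂ] H} (hB : IsSelfAdjoint B) (hBB : B * B = A)
    {C : H →L[ℂ] H} (hC : A * C = star C * A) {u : H} (h0 : ‖B u‖ = 0) :
    A (C u) = 0 ∧ ‖B (C u)‖ = 0 := by
  have hBu : B u = 0 := norm_eq_zero.1 h0
  have hAu : A u = 0 := by rw [← hBB]; simp [mul_apply, hBu]
  have hACu : A (C u) = 0 := by
    have := congrArg (fun (W : H →L[ℂ] H) => W u) hC
    simp only [ContinuousLinearMap.mul_apply] at this
    rw [this, hAu, map_zero]
  refine ⟨hACu, ?_⟩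
  have : ‖B (C u)‖ ^ 2 = 0 := by
    rw [norm_B_sq hB hBB, hACu]
    simp
  simpa using pow_eq_zero_iff (n := 2) (by norm_num) |>.1 this

lemma key2 {A B : H →L[ℂ] H} (hB : IsSelfAdjoint B) (hBB : B * B = A) (hA0 : A ≠ 0)
    {U U' : H →L[ℂ] H} (hU : A * U = star U' * A) (hU' : A * U' = star U * A)
    {x : H} (hx : ‖B x‖ = 1) : ‖B (U x)‖ ≤ Real.sqrt ‖U' * U‖ := by
  have hS : A * (U' * U) = star (U' * U) * A := by
    rw [star_mul, ← mul_assoc, hU', mul_assoc, hU, ← mul_assoc]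
  have h1 : ‖B (U x)‖ ^ 2 = (⟪x, A ((U' * U) x)⟫).re := by
    rw [norm_B_sq hB hBB]
    congr 1
    calc ⟪U x, A (U x)⟫ = ⟪x, (adjoint U) (A (U x))⟫ := (adjoint_inner_right U _ _).symm
      _ = ⟪x, ((star U * A * U)) x⟫ := by rw [← star_eq_adjoint]; simp [mul_apply]
      _ = ⟪x, A ((U' * U) x)⟫ := by rw [← hU', mul_assoc]; simp [mul_apply]
  have h2 : (⟪x, A ((U' * U) x)⟫).re ≤ ‖U' * U‖ := by
    refine le_trans ?_ (key hB hBB hA0 hS hx)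
    exact Complex.re_le_norm _
  rw [← Real.sqrt_sq (norm_nonneg (B (U x)))]
  exact Real.sqrt_le_sqrt (h1 ▸ h2)

lemma key3 {A B : H →L[ℂ] H} (hB : IsSelfAdjoint B) (hBB : B * B = A)
    {C : H →L[ℂ] H} (hC : A * C = star C * A) {M : ℝ} (hM : 0 ≤ M)
    (h : ∀ u : H, |(⟪u, A (C u)⟫).re| ≤ M * ‖B u‖ ^ 2)
    {x : H} (hx : ‖B x‖ = 1) : ‖B (C x)‖ ≤ M := by
  have hAsa : IsSelfAdjoint A := by
    rw [← hBB, IsSelfAdjoint, star_mul, hB.star_eq]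
  have hACsa : IsSelfAdjoint (A * C) := by
    rw [IsSelfAdjoint, star_mul, hAsa.star_eq, ← hC]
  by_cases h0 : ‖B (C x)‖ = 0
  · rw [h0]; exact hM
  set t : ℝ := ‖B (C x)‖ with ht
  have htpos : 0 < t := lt_of_le_of_ne (norm_nonneg _) (Ne.symm h0)
  set y : H := ((t : ℂ))⁻¹ • C x with hy
  have hyn : ‖B y‖ = 1 := by
    rw [hy, map_smul, norm_smul]
    simp only [norm_inv, Complex.norm_real, Real.norm_eq_abs, abs_of_pos htpos]
    rw [← ht, inv_mul_cancel₀ htpos.ne']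
  have htC : (t : ℂ) ≠ 0 := Complex.ofReal_ne_zero.2 htpos.ne'
  have hz : (⟪y, A (C x)⟫).re = t := by
    rw [hy, inner_smul_left]
    rw [inner_A_eq hB hBB, inner_self_eq_norm_sq_to_K, ← ht]
    rw [map_inv₀, Complex.conj_ofReal]
    have he : ((t : ℂ))⁻¹ * ((t : ℝ) : ℂ) ^ 2 = (t : ℂ) := by
      rw [pow_two, ← mul_assoc, inv_mul_cancel₀ htC, one_mul]
    norm_num [he]
  have hsym : ∀ u v : H, ⟪u, A (C v)⟫ = (starRingEnd ℂ) ⟪v, A (C u)⟫ := by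
    intro u v
    calc ⟪u, A (C v)⟫ = ⟪u, (A * C) v⟫ := by simp [mul_apply]
      _ = ⟪(A * C) u, v⟫ := by
          conv_lhs => rw [← hACsa.adjoint_eq]
          exact adjoint_inner_right _ _ _
      _ = (starRingEnd ℂ) ⟪v, (A * C) u⟫ := (inner_conj_symm _ _).symm
      _ = (starRingEnd ℂ) ⟪v, A (C u)⟫ := by simp [mul_apply]
  have hpol : 4 * (⟪y, A (C x)⟫).re
      = (⟪x + y, A (C (x + y))⟫).re - (⟪x - y, A (C (x - y))⟫).re := by
    have e1 : ⟪x + y, A (C (x + y))⟫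
        = ⟪x, A (C x)⟫ + ⟪x, A (C y)⟫ + ⟪y, A (C x)⟫ + ⟪y, A (C y)⟫ := by
      rw [map_add, map_add, inner_add_left, inner_add_right, inner_add_right]
      ring
    have e2 : ⟪x - y, A (C (x - y))⟫
        = ⟪x, A (C x)⟫ - ⟪x, A (C y)⟫ - ⟪y, A (C x)⟫ + ⟪y, A (C y)⟫ := by
      rw [map_sub, map_sub, inner_sub_left, inner_sub_right, inner_sub_right]
      ring
    rw [e1, e2, hsym x y]
    have hcre : ((starRingEnd ℂ) (⟪y, A (C x)⟫)).re = (⟪y, A (C x)⟫).re :=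
      Complex.conj_re _
    simp only [Complex.add_re, Complex.sub_re, hcre]
    ring
  have hpar : ‖B (x + y)‖ ^ 2 + ‖B (x - y)‖ ^ 2 = 4 := by
    rw [map_add, map_sub]
    have := parallelogram_law_with_norm ℂ (B x) (B y)
    rw [hx] at this
    rw [hyn] at this
    nlinarith [this]
  have h1 := h (x + y)
  have h2 := h (x - y)
  have : 4 * t ≤ 4 * M := by
    rw [← hz]
    calc 4 * (⟪y, A (C x)⟫).re
        = (⟪x + y, A (C (x + y))⟫).re - (⟪x - y, A (C (x - y))⟫).re := hpol
      _ ≤ M * ‖B (x + y)‖ ^ 2 + M * ‖B (x - y)‖ ^ 2 := by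
          have := abs_le.1 h1
          have := abs_le.1 h2
          linarith [(abs_le.1 h1).2, (abs_le.1 h2).1]
      _ = M * (‖B (x + y)‖ ^ 2 + ‖B (x - y)‖ ^ 2) := by ring
      _ = 4 * M := by rw [hpar]; ring
  linarith


lemma normA_eq {A B : H →L[ℂ] H} (hB : IsSelfAdjoint B) (hBB : B * B = A) (x : H) :
    normA A x = ‖B x‖ := by
  simp only [normA, innerA]
  rw [← norm_B_sq hB hBB, Real.sqrt_sq (norm_nonneg _)]

lemma B_smul_norm (B : H →L[ℂ] H) (c : ℝ) (u : H) :
    ‖B (((c : ℝ) : ℂ) • u)‖ = |c| * ‖B u‖ := by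
  rw [map_smul, norm_smul, Complex.norm_real, Real.norm_eq_abs]

lemma quad_smul (A C : H →L[ℂ] H) (c : ℝ) (u : H) :
    ⟪((c : ℝ) : ℂ) • u, A (C (((c : ℝ) : ℂ) • u))⟫
      = ((c ^ 2 : ℝ) : ℂ) * ⟪u, A (C u)⟫ := by
  rw [map_smul, map_smul, inner_smul_left, inner_smul_right, Complex.conj_ofReal]
  push_cast
  ring

lemma normalize_norm {A B : H →L[ℂ] H} (hB : IsSelfAdjoint B) (hBB : B * B = A)
    {C : H →L[ℂ] H} (hC : A * C = star C * A) {a : ℝ}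
    (hpt : ∀ v : H, ‖B v‖ = 1 → ‖B (C v)‖ ≤ a) :
    ∀ u : H, ‖B (C u)‖ ≤ a * ‖B u‖ := by
  intro u
  by_cases h0 : ‖B u‖ = 0
  · rw [(Bzero hB hBB hC h0).2, h0, mul_zero]
  · have hpos : 0 < ‖B u‖ := lt_of_le_of_ne (norm_nonneg _) (Ne.symm h0)
    set v : H := ((‖B u‖⁻¹ : ℝ) : ℂ) • u with hv
    have hvn : ‖B v‖ = 1 := by
      rw [hv, B_smul_norm, abs_of_pos (inv_pos.2 hpos), inv_mul_cancel₀ h0]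
    have h1 := hpt v hvn
    have h2 : B (C v) = ((‖B u‖⁻¹ : ℝ) : ℂ) • B (C u) := by
      rw [hv, map_smul, map_smul]
    have h3 : ‖B (C v)‖ = ‖B u‖⁻¹ * ‖B (C u)‖ := by
      rw [h2, norm_smul, Complex.norm_real, Real.norm_eq_abs, abs_of_pos (inv_pos.2 hpos)]
    rw [h3] at h1
    have h4 := mul_le_mul_of_nonneg_left h1 hpos.le
    rw [← mul_assoc, mul_inv_cancel₀ h0, one_mul] at h4
    linarith [h4]

lemma normalize_quad {A B : H →L[ℂ] H} (hB : IsSelfAdjoint B) (hBB : B * B = A)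
    {C : H →L[ℂ] H} (hC : A * C = star C * A) {M : ℝ}
    (hpt : ∀ v : H, ‖B v‖ = 1 → |(⟪v, A (C v)⟫).re| ≤ M) :
    ∀ u : H, |(⟪u, A (C u)⟫).re| ≤ M * ‖B u‖ ^ 2 := by
  intro u
  by_cases h0 : ‖B u‖ = 0
  · rw [(Bzero hB hBB hC h0).1]
    simp [h0]
  · have hpos : 0 < ‖B u‖ := lt_of_le_of_ne (norm_nonneg _) (Ne.symm h0)
    set v : H := ((‖B u‖⁻¹ : ℝ) : ℂ) • u with hv
    have hvn : ‖B v‖ = 1 := by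
      rw [hv, B_smul_norm, abs_of_pos (inv_pos.2 hpos), inv_mul_cancel₀ h0]
    have h1 := hpt v hvn
    have h2 : ⟪v, A (C v)⟫ = (((‖B u‖⁻¹) ^ 2 : ℝ) : ℂ) * ⟪u, A (C u)⟫ := by
      rw [hv]
      exact quad_smul A C _ u
    rw [h2, Complex.re_ofReal_mul, abs_mul, abs_of_pos (by positivity :
      (0:ℝ) < (‖B u‖⁻¹) ^ 2)] at h1
    have h4 := mul_le_mul_of_nonneg_left h1 (by positivity : (0:ℝ) ≤ ‖B u‖ ^ 2)
    rw [← mul_assoc, show ‖B u‖ ^ 2 * (‖B u‖⁻¹) ^ 2 = 1 by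
      rw [← mul_pow, mul_inv_cancel₀ h0, one_pow], one_mul] at h4
    linarith [h4]

end Stmt4Aux

set_option maxHeartbeats 1000000 in
open Stmt4Aux in
theorem stmt4 (A : H →L[ℂ] H) (hA : A.IsPositive) (hA0 : A ≠ 0)
    (T Ts : H →L[ℂ] H)
    (hT : A.comp Ts = (ContinuousLinearMap.adjoint T).comp A) :
    (1/2) * opNormA A (ReA (T * T) (Ts * Ts))
      + (1/2) * wA A T * |opNormA A (ReA T Ts) - opNormA A (ImA T Ts)|
      ≤ (wA A T)^2 := by
  classical
  have h0A : 0 ≤ A := (ContinuousLinearMap.nonneg_iff_isPositive A).2 hA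
  set B : H →L[ℂ] H := CFC.sqrt A with hBdef
  have hBB : B * B = A := CFC.sqrt_mul_sqrt_self A h0A
  have hBsa : IsSelfAdjoint B :=
    ((ContinuousLinearMap.nonneg_iff_isPositive B).1 (CFC.sqrt_nonneg A)).isSelfAdjoint
  have hAsa : IsSelfAdjoint A := hA.isSelfAdjoint
  have hT1 : A * Ts = star T * A := by rw [star_eq_adjoint]; exact hT
  have hT2 : A * T = star Ts * A := by
    have h := congrArg star hT1
    rw [star_mul, star_mul, hAsa.star_eq, star_star] at h
    exact h.symm
  set R := ReA T Ts with hRdef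
  set Sm := ImA T Ts with hSmdef
  set C2 := ReA (T * T) (Ts * Ts) with hC2def
  -- A-selfadjointness of R and Sm
  have hstar2 : star ((2:ℂ)⁻¹) = (2:ℂ)⁻¹ := by
    rw [Complex.star_def, map_inv₀, map_ofNat]
  have hR : A * R = star R * A := by
    have h1 : A * R = (2:ℂ)⁻¹ • (star Ts * A + star T * A) := by
      rw [hRdef, ReA, mul_smul_comm, mul_add, hT1, hT2]
    have h2 : star R * A = (2:ℂ)⁻¹ • (star T * A + star Ts * A) := by
      rw [hRdef, ReA, star_smul, star_add, smul_mul_assoc, add_mul, hstar2]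
    rw [h1, h2, add_comm]
  have hstarI : star ((2 * Complex.I)⁻¹) = -(2 * Complex.I)⁻¹ := by
    rw [Complex.star_def, map_inv₀, map_mul, Complex.conj_I, map_ofNat, mul_neg, inv_neg]
  have hSm : A * Sm = star Sm * A := by
    have h1 : A * Sm = (2 * Complex.I)⁻¹ • (star Ts * A - star T * A) := by
      rw [hSmdef, ImA, mul_smul_comm, mul_sub, hT1, hT2]
    have h2 : star Sm * A = (-(2 * Complex.I)⁻¹) • (star T * A - star Ts * A) := by
      rw [hSmdef, ImA, star_smul, star_sub, smul_mul_assoc, sub_mul, hstarI]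
    rw [h1, h2]
    module
  -- C2 = R*R - Sm*Sm
  have e1 : (T + Ts) * (T + Ts) = (T * T + Ts * Ts) + (T * Ts + Ts * T) := by
    noncomm_ring
  have e2 : (T - Ts) * (T - Ts) = (T * T + Ts * Ts) - (T * Ts + Ts * T) := by
    noncomm_ring
  have hRR : R * R = ((4:ℂ))⁻¹ • ((T * T + Ts * Ts) + (T * Ts + Ts * T)) := by
    rw [hRdef, ReA, smul_mul_assoc, mul_smul_comm, smul_smul, e1]
    congr 1
    norm_num
  have hII : (2 * Complex.I)⁻¹ * (2 * Complex.I)⁻¹ = -(4:ℂ)⁻¹ := by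
    rw [← mul_inv]
    rw [show (2 * Complex.I) * (2 * Complex.I) = 4 * (Complex.I * Complex.I) by ring,
      Complex.I_mul_I]
    rw [show (4:ℂ) * -1 = -4 by ring, inv_neg]
  have hSS : Sm * Sm = (-(4:ℂ)⁻¹) • ((T * T + Ts * Ts) - (T * Ts + Ts * T)) := by
    rw [hSmdef, ImA, smul_mul_assoc, mul_smul_comm, smul_smul, e2, hII]
  have hC2R : C2 = R * R - Sm * Sm := by
    rw [hC2def, ReA, hRR, hSS]
    module
  have hC2 : A * C2 = star C2 * A := by
    rw [hC2R, mul_sub, star_sub, sub_mul]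
    congr 1
    · rw [← mul_assoc, hR, mul_assoc, hR, ← mul_assoc, star_mul]
    · rw [← mul_assoc, hSm, mul_assoc, hSm, ← mul_assoc, star_mul]
  -- normalized vector
  obtain ⟨x0, hx0⟩ : ∃ x0 : H, ‖B x0‖ = 1 := by
    have hBne : B ≠ 0 := by
      intro h; exact hA0 (by rw [← hBB, h, mul_zero])
    obtain ⟨u, hu⟩ : ∃ u : H, B u ≠ 0 := by
      by_contra h
      push_neg at h
      exact hBne (ContinuousLinearMap.ext fun u => by simpa using h u)
    refine ⟨((‖B u‖⁻¹ : ℝ) : ℂ) • u, ?_⟩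
    rw [B_smul_norm, abs_of_pos (inv_pos.2 (norm_pos_iff.2 hu)),
      inv_mul_cancel₀ (norm_ne_zero_iff.2 hu)]
  -- set translations
  have hnA : ∀ x : H, normA A x = ‖B x‖ := normA_eq hBsa hBB
  have hWset : wA A T = sSup {r : ℝ | ∃ x : H, ‖B x‖ = 1 ∧ r = ‖(⟪x, A (T x)⟫ : ℂ)‖} := by
    rw [wA]
    congr 1
    ext r
    simp only [Set.mem_setOf_eq, hnA, innerA]
  have hOpset : ∀ U : H →L[ℂ] H,
      opNormA A U = sSup {r : ℝ | ∃ x : H, ‖B x‖ = 1 ∧ r = ‖B (U x)‖} := by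
    intro U
    rw [opNormA]
    congr 1
    ext r
    simp only [Set.mem_setOf_eq, hnA]
  set W : Set ℝ := {r : ℝ | ∃ x : H, ‖B x‖ = 1 ∧ r = ‖(⟪x, A (T x)⟫ : ℂ)‖} with hWdef
  -- numerical radius bounds
  have bddW : BddAbove W := by
    refine ⟨Real.sqrt ‖Ts * T‖, ?_⟩
    rintro r ⟨x, hx, rfl⟩
    calc ‖(⟪x, A (T x)⟫ : ℂ)‖ = ‖(⟪B x, B (T x)⟫ : ℂ)‖ := by rw [inner_A_eq hBsa hBB]
      _ ≤ ‖B x‖ * ‖B (T x)‖ := norm_inner_le_norm _ _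
      _ = ‖B (T x)‖ := by rw [hx, one_mul]
      _ ≤ Real.sqrt ‖Ts * T‖ := key2 hBsa hBB hA0 hT2 hT1 hx
  have hWpt : ∀ x : H, ‖B x‖ = 1 → ‖(⟪x, A (T x)⟫ : ℂ)‖ ≤ sSup W := fun x hx =>
    le_csSup bddW ⟨x, hx, rfl⟩
  have hwnn : 0 ≤ sSup W := le_trans (norm_nonneg _) (hWpt x0 hx0)
  -- conjugate identity
  have hTsconj : ∀ v : H, ⟪v, A (Ts v)⟫ = (starRingEnd ℂ) ⟪v, A (T v)⟫ := by
    intro v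
    calc ⟪v, A (Ts v)⟫ = ⟪v, (A * Ts) v⟫ := by simp [mul_apply]
      _ = ⟪v, (star T) (A v)⟫ := by rw [hT1]; simp [mul_apply]
      _ = ⟪T v, A v⟫ := by rw [star_eq_adjoint]; exact adjoint_inner_right _ _ _
      _ = (starRingEnd ℂ) ⟪A v, T v⟫ := (inner_conj_symm _ _).symm
      _ = (starRingEnd ℂ) ⟪v, A (T v)⟫ := by
          congr 1
          conv_lhs => rw [← hAsa.adjoint_eq]
          exact adjoint_inner_left _ _ _
  have hztr : ∀ v : H, ⟪v, A (R v)⟫ = (((⟪v, A (T v)⟫).re : ℝ) : ℂ) := by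
    intro v
    have hRv : R v = (2:ℂ)⁻¹ • (T v + Ts v) := by
      rw [hRdef, ReA]
      simp
    rw [hRv, map_smul, map_add, inner_smul_right, inner_add_right, hTsconj v,
      Complex.add_conj]
    push_cast
    ring
  have hzti : ∀ v : H, ⟪v, A (Sm v)⟫ = (((⟪v, A (T v)⟫).im : ℝ) : ℂ) := by
    intro v
    have hSv : Sm v = (2 * Complex.I)⁻¹ • (T v - Ts v) := by
      rw [hSmdef, ImA]
      simp
    rw [hSv, map_smul, map_sub, inner_smul_right, inner_sub_right, hTsconj v,
      Complex.sub_conj]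
    have hIne : (2 * Complex.I) ≠ 0 := by simp [Complex.I_ne_zero]
    field_simp
    push_cast
    ring
  -- pointwise bounds for R and Sm in terms of w
  have hRquadU : ∀ v : H, ‖B v‖ = 1 → |(⟪v, A (R v)⟫).re| ≤ sSup W := by
    intro v hv
    rw [hztr v, Complex.ofReal_re]
    exact le_trans (Complex.abs_re_le_norm _)
      (hWpt v hv)
  have hSquadU : ∀ v : H, ‖B v‖ = 1 → |(⟪v, A (Sm v)⟫).re| ≤ sSup W := by
    intro v hv
    rw [hzti v, Complex.ofReal_re]
    exact le_trans (Complex.abs_im_le_norm _)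
      (hWpt v hv)
  have hRpt : ∀ x : H, ‖B x‖ = 1 → ‖B (R x)‖ ≤ sSup W := fun x hx =>
    key3 hBsa hBB hR hwnn (normalize_quad hBsa hBB hR hRquadU) hx
  have hSpt : ∀ x : H, ‖B x‖ = 1 → ‖B (Sm x)‖ ≤ sSup W := fun x hx =>
    key3 hBsa hBB hSm hwnn (normalize_quad hBsa hBB hSm hSquadU) hx
  -- a and b
  set SR : Set ℝ := {r : ℝ | ∃ x : H, ‖B x‖ = 1 ∧ r = ‖B (R x)‖} with hSRdef
  set SS : Set ℝ := {r : ℝ | ∃ x : H, ‖B x‖ = 1 ∧ r = ‖B (Sm x)‖} with hSSdef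
  have bddR : BddAbove SR := ⟨sSup W, by rintro r ⟨x, hx, rfl⟩; exact hRpt x hx⟩
  have bddS : BddAbove SS := ⟨sSup W, by rintro r ⟨x, hx, rfl⟩; exact hSpt x hx⟩
  have haw : sSup SR ≤ sSup W := csSup_le ⟨_, ⟨x0, hx0, rfl⟩⟩
    (by rintro r ⟨x, hx, rfl⟩; exact hRpt x hx)
  have hbw : sSup SS ≤ sSup W := csSup_le ⟨_, ⟨x0, hx0, rfl⟩⟩
    (by rintro r ⟨x, hx, rfl⟩; exact hSpt x hx)
  have hann : 0 ≤ sSup SR := le_trans (norm_nonneg _) (le_csSup bddR ⟨x0, hx0, rfl⟩)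
  have hbnn : 0 ≤ sSup SS := le_trans (norm_nonneg _) (le_csSup bddS ⟨x0, hx0, rfl⟩)
  have haRu : ∀ u : H, ‖B (R u)‖ ≤ sSup SR * ‖B u‖ :=
    normalize_norm hBsa hBB hR (fun v hv => le_csSup bddR ⟨v, hv, rfl⟩)
  have hbSu : ∀ u : H, ‖B (Sm u)‖ ≤ sSup SS * ‖B u‖ :=
    normalize_norm hBsa hBB hSm (fun v hv => le_csSup bddS ⟨v, hv, rfl⟩)
  -- quadratic form of C2
  have hsq : ∀ D : H →L[ℂ] H, A * D = star D * A → ∀ u : H,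
      ⟪u, A ((D * D) u)⟫ = ((‖B (D u)‖ ^ 2 : ℝ) : ℂ) := by
    intro D hD u
    calc ⟪u, A ((D * D) u)⟫ = ⟪u, (A * D) (D u)⟫ := by simp [mul_apply]
      _ = ⟪u, (star D) (A (D u))⟫ := by rw [hD]; simp [mul_apply]
      _ = ⟪D u, A (D u)⟫ := by rw [star_eq_adjoint]; exact adjoint_inner_right _ _ _
      _ = ((‖B (D u)‖ ^ 2 : ℝ) : ℂ) := by
          rw [inner_A_eq hBsa hBB, inner_self_eq_norm_sq_to_K]
          norm_cast
  set M : ℝ := max ((sSup SR) ^ 2) ((sSup SS) ^ 2) with hMdef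
  have hMnn : 0 ≤ M := le_trans (sq_nonneg _) (le_max_left _ _)
  have hquadC2 : ∀ u : H, |(⟪u, A (C2 u)⟫).re| ≤ M * ‖B u‖ ^ 2 := by
    intro u
    have hC2u : C2 u = (R * R) u - (Sm * Sm) u := by rw [hC2R]; simp
    rw [hC2u, map_sub, inner_sub_right, hsq R hR u, hsq Sm hSm u,
      ← Complex.ofReal_sub, Complex.ofReal_re]
    have h1' : ‖B (R u)‖ ^ 2 ≤ (sSup SR) ^ 2 * ‖B u‖ ^ 2 := by
      calc ‖B (R u)‖ ^ 2 ≤ (sSup SR * ‖B u‖) ^ 2 :=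
            pow_le_pow_left₀ (norm_nonneg _) (haRu u) 2
        _ = (sSup SR) ^ 2 * ‖B u‖ ^ 2 := by ring
    have h2' : ‖B (Sm u)‖ ^ 2 ≤ (sSup SS) ^ 2 * ‖B u‖ ^ 2 := by
      calc ‖B (Sm u)‖ ^ 2 ≤ (sSup SS * ‖B u‖) ^ 2 :=
            pow_le_pow_left₀ (norm_nonneg _) (hbSu u) 2
        _ = (sSup SS) ^ 2 * ‖B u‖ ^ 2 := by ring
    have h3 : (sSup SR) ^ 2 * ‖B u‖ ^ 2 ≤ M * ‖B u‖ ^ 2 :=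
      mul_le_mul_of_nonneg_right (le_max_left _ _) (sq_nonneg _)
    have h4 : (sSup SS) ^ 2 * ‖B u‖ ^ 2 ≤ M * ‖B u‖ ^ 2 :=
      mul_le_mul_of_nonneg_right (le_max_right _ _) (sq_nonneg _)
    rw [abs_le]
    constructor
    · linarith [sq_nonneg ‖B (R u)‖]
    · linarith [sq_nonneg ‖B (Sm u)‖]
  have hC2pt : ∀ x : H, ‖B x‖ = 1 → ‖B (C2 x)‖ ≤ M := fun x hx =>
    key3 hBsa hBB hC2 hMnn hquadC2 hx
  set SC : Set ℝ := {r : ℝ | ∃ x : H, ‖B x‖ = 1 ∧ r = ‖B (C2 x)‖} with hSCdef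
  have hNM : sSup SC ≤ M := csSup_le ⟨_, ⟨x0, hx0, rfl⟩⟩
    (by rintro r ⟨x, hx, rfl⟩; exact hC2pt x hx)
  -- final arithmetic
  rw [hWset, hOpset C2, hOpset R, hOpset Sm, ← hSRdef, ← hSSdef, ← hSCdef]
  set w := sSup W
  set a := sSup SR
  set b := sSup SS
  set N := sSup SC
  rcases le_total a b with hab | hab
  · have hMb : M = b ^ 2 := max_eq_right (by nlinarith)
    rw [abs_of_nonpos (by linarith : a - b ≤ 0)]
    nlinarith [hNM, hMb]
  · have hMa : M = a ^ 2 := max_eq_left (by nlinarith)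
    rw [abs_of_nonneg (by linarith : 0 ≤ a - b)]
    nlinarith [hNM, hMa]
end
end

section
/- For all vectors x, y, e ∈ H with ‖e‖_A = 1 and every nonzero complex number α, one has |⟨x,e⟩_A · ⟨e,y⟩_A| ≤ ( |⟨x,y⟩_A| + max{1, |α − 1|}·‖x‖_A·‖y‖_A ) / |α|. -/
noncomputable section

open scoped ComplexInnerProductSpace

variable {H : Type*} [NormedAddCommGroup H] [InnerProductSpace ℂ H] [CompleteSpace H]


private lemma two_dim_cs {p q r s X Y : ℝ} (hp : 0 ≤ p) (hq : 0 ≤ q) (hr : 0 ≤ r) (hs : 0 ≤ s)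
    (hX : 0 ≤ X) (hY : 0 ≤ Y) (h1 : p^2 + r^2 = X^2) (h2 : q^2 + s^2 = Y^2) :
    p*q + r*s ≤ X*Y := by
  nlinarith [sq_nonneg (p*s - q*r), mul_nonneg (mul_nonneg hp hq) (mul_nonneg hr hs),
    mul_nonneg hX hY, sq_nonneg (X*Y - (p*q + r*s))]

private lemma buzano_aux {H : Type*} [NormedAddCommGroup H] [InnerProductSpace ℂ H]
    (u v w : H) (hw : ‖w‖ = 1) (α : ℂ) (hα : α ≠ 0) :
    ‖⟪w, u⟫ * ⟪v, w⟫‖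
      ≤ (‖⟪v, u⟫‖ + max 1 ‖α - 1‖ * ‖u‖ * ‖v‖) / ‖α‖ := by
  set a := ⟪w, u⟫ with ha
  set b := ⟪w, v⟫ with hb
  have hvw : ⟪v, w⟫ = starRingEnd ℂ b := (inner_conj_symm v w).symm
  have hww : ⟪w, w⟫ = (1 : ℂ) := by
    rw [inner_self_eq_norm_sq_to_K, hw]; norm_num
  have huw : ⟪u, w⟫ = starRingEnd ℂ a := (inner_conj_symm u w).symm
  have huu : ⟪u, u⟫ = ((‖u‖^2 : ℝ) : ℂ) := by exact_mod_cast inner_self_eq_norm_sq_to_K u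
  have hvv : ⟪v, v⟫ = ((‖v‖^2 : ℝ) : ℂ) := by exact_mod_cast inner_self_eq_norm_sq_to_K v
  set u₀ := u - a • w with hu₀
  set v₀ := v - b • w with hv₀
  have key : ⟪v₀, u₀⟫ = ⟪v, u⟫ - a * starRingEnd ℂ b := by
    simp only [hu₀, hv₀, inner_sub_left, inner_sub_right, inner_smul_left, inner_smul_right,
      hww, hvw, huw, ← ha, ← hb]
    ring
  have hnu : ‖u₀‖^2 = ‖u‖^2 - ‖a‖^2 := by
    have h1 : ⟪u₀, u₀⟫ = ((‖u‖^2 - ‖a‖^2 : ℝ) : ℂ) := by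
      simp only [hu₀, inner_sub_left, inner_sub_right, inner_smul_left, inner_smul_right,
        hww, huw, ← ha, huu]
      rw [Complex.ofReal_sub, Complex.sq_norm, ← Complex.mul_conj]
      push_cast
      ring
    have h2 : ((‖u₀‖^2 : ℝ) : ℂ) = ((‖u‖^2 - ‖a‖^2 : ℝ) : ℂ) := by
      rw [← h1]
      exact_mod_cast (inner_self_eq_norm_sq_to_K (𝕜 := ℂ) u₀).symm
    exact Complex.ofReal_inj.mp h2
  have hnv : ‖v₀‖^2 = ‖v‖^2 - ‖b‖^2 := by
    have h1 : ⟪v₀, v₀⟫ = ((‖v‖^2 - ‖b‖^2 : ℝ) : ℂ) := by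
      simp only [hv₀, inner_sub_left, inner_sub_right, inner_smul_left, inner_smul_right,
        hww, hvw, ← hb, hvv]
      rw [Complex.ofReal_sub, Complex.sq_norm, ← Complex.mul_conj]
      push_cast
      ring
    have h2 : ((‖v₀‖^2 : ℝ) : ℂ) = ((‖v‖^2 - ‖b‖^2 : ℝ) : ℂ) := by
      rw [← h1]
      exact_mod_cast (inner_self_eq_norm_sq_to_K (𝕜 := ℂ) v₀).symm
    exact Complex.ofReal_inj.mp h2
  set M := max 1 ‖α - 1‖ with hM
  have hM1 : (1:ℝ) ≤ M := le_max_left _ _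
  have hM2 : ‖1 - α‖ ≤ M := by
    rw [← norm_neg, neg_sub]; exact le_max_right _ _
  have step : ‖u₀‖ * ‖v₀‖ + ‖a‖ * ‖b‖ ≤ ‖u‖ * ‖v‖ :=
    two_dim_cs (norm_nonneg _) (norm_nonneg _) (norm_nonneg _)
      (norm_nonneg _) (norm_nonneg _) (norm_nonneg _)
      (by rw [hnu]; ring) (by rw [hnv]; ring)
  have hcs : ‖⟪v₀, u₀⟫‖ ≤ ‖u₀‖ * ‖v₀‖ := by
    rw [mul_comm]
    exact norm_inner_le_norm v₀ u₀
  have hab : ‖a * starRingEnd ℂ b‖ = ‖a‖ * ‖b‖ := by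
    rw [norm_mul, Complex.norm_conj]
  have e1 : α * (a * starRingEnd ℂ b)
      = ⟪v, u⟫ - (⟪v₀, u₀⟫ + (1 - α) * (a * starRingEnd ℂ b)) := by
    rw [key]; ring
  have t1 : ‖α * (a * starRingEnd ℂ b)‖
      ≤ ‖⟪v, u⟫‖ + ‖⟪v₀, u₀⟫ + (1 - α) * (a * starRingEnd ℂ b)‖ := by
    rw [e1, sub_eq_add_neg]
    refine (norm_add_le _ _).trans ?_
    rw [norm_neg]
  have t2 : ‖⟪v₀, u₀⟫ + (1 - α) * (a * starRingEnd ℂ b)‖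
      ≤ ‖⟪v₀, u₀⟫‖ + ‖1 - α‖ * (‖a‖ * ‖b‖) := by
    have h := norm_add_le (⟪v₀, u₀⟫) ((1 - α) * (a * starRingEnd ℂ b))
    rwa [norm_mul, hab] at h
  have t3 : ‖1 - α‖ * (‖a‖ * ‖b‖)
      ≤ M * (‖a‖ * ‖b‖) :=
    mul_le_mul_of_nonneg_right hM2 (mul_nonneg (norm_nonneg _) (norm_nonneg _))
  have main : ‖α‖ * ‖a * starRingEnd ℂ b‖
      ≤ ‖⟪v, u⟫‖ + M * ‖u‖ * ‖v‖ := by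
    have e2 : ‖α‖ * ‖a * starRingEnd ℂ b‖
        = ‖α * (a * starRingEnd ℂ b)‖ := (norm_mul _ _).symm
    rw [e2]
    have h5 : M * (‖u₀‖ * ‖v₀‖ + ‖a‖ * ‖b‖) ≤ M * (‖u‖ * ‖v‖) :=
      mul_le_mul_of_nonneg_left step (le_trans zero_le_one hM1)
    have h6 : 0 ≤ ‖u₀‖ * ‖v₀‖ := mul_nonneg (norm_nonneg _) (norm_nonneg _)
    have h7 : 0 ≤ (M - 1) * (‖u₀‖ * ‖v₀‖) := mul_nonneg (by linarith) h6
    nlinarith [t1, t2, t3, hcs]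
  rw [hvw, le_div_iff₀ (norm_pos_iff.mpr hα)]
  calc ‖a * starRingEnd ℂ b‖ * ‖α‖
      = ‖α‖ * ‖a * starRingEnd ℂ b‖ := mul_comm _ _
    _ ≤ ‖⟪v, u⟫‖ + M * ‖u‖ * ‖v‖ := main

set_option synthInstance.maxHeartbeats 1000000 in
set_option maxHeartbeats 1600000 in
theorem stmt7 (A : H →L[ℂ] H) (hA : A.IsPositive) (hA0 : A ≠ 0)
    (x y e : H) (he : normA A e = 1) (α : ℂ) (hα : α ≠ 0) :
    ‖innerA A x e * innerA A e y‖
      ≤ (‖innerA A x y‖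
          + max 1 ‖α - 1‖ * normA A x * normA A y) / ‖α‖ := by
  have hA' : (0 : H →L[ℂ] H) ≤ A := (ContinuousLinearMap.nonneg_iff_isPositive A).mpr hA
  set f := CFC.sqrt A with hf
  have hf0 : (0 : H →L[ℂ] H) ≤ f := CFC.sqrt_nonneg A
  have hfsa : IsSelfAdjoint f := IsSelfAdjoint.of_nonneg hf0
  have hff : f * f = A := CFC.sqrt_mul_sqrt_self A hA'
  have hinner : ∀ p q : H, innerA A p q = ⟪f q, f p⟫ := by
    intro p q
    have hap : A p = f (f p) := by rw [← hff]; rfl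
    simp only [innerA]
    rw [hap, ← ContinuousLinearMap.adjoint_inner_left,
      ContinuousLinearMap.isSelfAdjoint_iff'.mp hfsa]
  have hnorm : ∀ p : H, normA A p = ‖f p‖ := by
    intro p
    rw [normA, hinner]
    have h1 : (⟪f p, f p⟫ : ℂ) = ((‖f p‖^2 : ℝ) : ℂ) := by
      exact_mod_cast inner_self_eq_norm_sq_to_K (f p)
    rw [h1, Complex.ofReal_re, Real.sqrt_sq (norm_nonneg _)]
  have hwe : ‖f e‖ = 1 := by rw [← hnorm]; exact he
  have h := buzano_aux (f x) (f y) (f e) hwe α hα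
  rw [hinner x e, hinner e y, hinner x y, hnorm x, hnorm y]
  exact h
end
end

section
/- Let T be a bounded linear operator on H admitting an A-adjoint T♯. Then for every nonzero complex number α, (w_A(T))² ≤ ( max{1, |1 − α|}·‖T‖_A² + w_A(T²) ) / |α|. -/
noncomputable section

open scoped ComplexInnerProductSpace

variable {H : Type*} [NormedAddCommGroup H] [InnerProductSpace ℂ H] [CompleteSpace H]

set_option linter.unusedSectionVars false

namespace AuxA

open ContinuousLinearMap

variable {A : H →L[ℂ] H}

lemma conjA (hA : A.IsPositive) (x y : H) :
    (starRingEnd ℂ) ⟪y, A x⟫ = ⟪x, A y⟫ := by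
  rw [inner_conj_symm]
  exact hA.1 x y

lemma reA_nonneg (hA : A.IsPositive) (x : H) : 0 ≤ (⟪x, A x⟫).re :=
  (Complex.nonneg_iff.mp (hA.inner_nonneg_right x)).1

lemma normA_def (A : H →L[ℂ] H) (x : H) : normA A x = Real.sqrt (⟪x, A x⟫).re := rfl

lemma normA_nonneg (A : H →L[ℂ] H) (x : H) : 0 ≤ normA A x := Real.sqrt_nonneg _

lemma normA_sq (hA : A.IsPositive) (x : H) : (normA A x) ^ 2 = (⟪x, A x⟫).re := by
  rw [normA_def, Real.sq_sqrt (reA_nonneg hA x)]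

/-- The pre-inner-product core induced by a positive operator. -/
def coreA (hA : A.IsPositive) : PreInnerProductSpace.Core ℂ H where
  inner x y := ⟪x, A y⟫
  conj_inner_symm x y := conjA hA x y
  re_inner_nonneg x := reA_nonneg hA x
  add_left x y z := by simp [inner_add_left]
  smul_left x y r := by simp [inner_smul_left, mul_comm]

/-- Cauchy-Schwarz for the `A`-semi-inner product. -/
lemma csA (hA : A.IsPositive) (x y : H) :
    ‖⟪x, A y⟫‖ ≤ normA A x * normA A y := by
  have h := @InnerProductSpace.Core.inner_mul_inner_self_le ℂ H _ _ _ (coreA hA) x y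
  have h' : ‖(⟪x, A y⟫ : ℂ)‖ * ‖(⟪y, A x⟫ : ℂ)‖
      ≤ (⟪x, A x⟫ : ℂ).re * (⟪y, A y⟫ : ℂ).re := h
  have hnc : ‖(⟪y, A x⟫ : ℂ)‖ = ‖(⟪x, A y⟫ : ℂ)‖ := by
    rw [← conjA hA x y]; exact (RCLike.norm_conj _).symm
  rw [hnc, ← sq] at h'
  refine le_of_pow_le_pow_left₀ two_ne_zero (mul_nonneg (normA_nonneg A x) (normA_nonneg A y)) ?_
  rw [mul_pow, normA_sq hA, normA_sq hA]
  exact h'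

set_option linter.unusedSectionVars false

lemma normA_le_norm (A : H →L[ℂ] H) (x : H) : normA A x ≤ Real.sqrt ‖A‖ * ‖x‖ := by
  rw [normA_def]
  have h1 : (⟪x, A x⟫).re ≤ ‖A‖ * ‖x‖ ^ 2 := by
    calc (⟪x, A x⟫).re ≤ ‖⟪x, A x⟫‖ := Complex.re_le_norm _
    _ = ‖(⟪x, A x⟫ : ℂ)‖ := rfl
    _ ≤ ‖x‖ * ‖A x‖ := norm_inner_le_norm _ _
    _ ≤ ‖x‖ * (‖A‖ * ‖x‖) := by
        exact mul_le_mul_of_nonneg_left (A.le_opNorm x) (norm_nonneg x)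
    _ = ‖A‖ * ‖x‖ ^ 2 := by ring
  calc Real.sqrt (⟪x, A x⟫).re ≤ Real.sqrt (‖A‖ * ‖x‖ ^ 2) := Real.sqrt_le_sqrt h1
  _ = Real.sqrt ‖A‖ * ‖x‖ := by
      rw [Real.sqrt_mul (norm_nonneg A), Real.sqrt_sq (norm_nonneg x)]

lemma normA_smul_real (A : H →L[ℂ] H) (t : ℝ) (x : H) :
    normA A ((t : ℂ) • x) = |t| * normA A x := by
  rw [normA_def, normA_def, map_smul]
  rw [inner_smul_left, inner_smul_right]
  have : ((starRingEnd ℂ) (t:ℂ) * ((t:ℂ) * ⟪x, A x⟫)).re = (t * t) * (⟪x, A x⟫).re := by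
    rw [Complex.conj_ofReal, ← mul_assoc, ← Complex.ofReal_mul, Complex.re_ofReal_mul]
  rw [this, show (t*t)*(⟪x, A x⟫).re = t^2 * (⟪x, A x⟫).re by ring,
    Real.sqrt_mul (sq_nonneg t), Real.sqrt_sq_eq_abs]

lemma star_comm_pow {S : H →L[ℂ] H} (hA : A.IsPositive)
    (hS : A * S = star S * A) : ∀ n : ℕ, A * S ^ n = star (S ^ n) * A := by
  intro n
  induction n with
  | zero => simp
  | succ n ih =>
      rw [pow_succ, ← mul_assoc, ih, mul_assoc, hS, ← mul_assoc, ← star_mul]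
      rw [pow_mul_comm']

lemma reA_symm (hA : A.IsPositive) (u v : H) : (⟪u, A v⟫ : ℂ).re = (⟪v, A u⟫ : ℂ).re := by
  rw [← conjA hA v u, Complex.conj_re]

lemma step_cs {S : H →L[ℂ] H} (hA : A.IsPositive)
    (hS : A * S = star S * A) (m : ℕ) (x : H) :
    (normA A ((S ^ m) x)) ^ 2 ≤ normA A x * normA A ((S ^ (2 * m)) x) := by
  rw [normA_sq hA]
  have h1 : A ((S ^ m) x) = (star (S ^ m)) (A x) := by
    have := congrArg (fun (R : H →L[ℂ] H) => R x) (star_comm_pow hA hS m)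
    simpa using this
  have hsym := reA_symm hA
  have h3 : (S ^ m) ((S ^ m) x) = (S ^ (2*m)) x := by
    rw [two_mul, pow_add]; rfl
  have h2 : (⟪(S ^ m) x, A ((S ^ m) x)⟫ : ℂ).re = (⟪x, A ((S ^ (2*m)) x)⟫ : ℂ).re := by
    rw [h1, ContinuousLinearMap.star_eq_adjoint, ContinuousLinearMap.adjoint_inner_right, h3]
    exact hsym _ _
  rw [h2]
  calc (⟪x, A ((S ^ (2*m)) x)⟫).re ≤ ‖⟪x, A ((S ^ (2*m)) x)⟫‖ := Complex.re_le_norm _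
  _ ≤ normA A x * normA A ((S ^ (2*m)) x) := csA hA _ _

lemma bootstrap {S : H →L[ℂ] H} (hA : A.IsPositive)
    (hS : A * S = star S * A) (x : H) :
    normA A (S x) ≤ ‖S‖ * normA A x := by
  set e := normA A x with he_def
  set a : ℕ → ℝ := fun n => normA A ((S ^ (2 ^ n)) x) with ha_def
  have ha_nonneg : ∀ n, 0 ≤ a n := fun n => normA_nonneg _ _
  have he_nonneg : 0 ≤ e := normA_nonneg _ _
  have hstep : ∀ n, (a n) ^ 2 ≤ a (n + 1) * e := by
    intro n
    have h := step_cs hA hS (2 ^ n) x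
    have h2 : 2 * 2 ^ n = 2 ^ (n + 1) := by ring
    rw [h2] at h
    calc (a n) ^ 2 ≤ normA A x * normA A ((S ^ (2 ^ (n+1))) x) := h
    _ = a (n + 1) * e := mul_comm _ _
  have ha0 : a 0 = normA A (S x) := by simp [ha_def]
  have hae : ∀ n, a n ≤ (Real.sqrt ‖A‖ * ‖x‖) * ‖S‖ ^ (2 ^ n) := by
    intro n
    calc a n ≤ Real.sqrt ‖A‖ * ‖(S ^ (2 ^ n)) x‖ := normA_le_norm _ _
    _ ≤ Real.sqrt ‖A‖ * (‖S ^ (2 ^ n)‖ * ‖x‖) :=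
        mul_le_mul_of_nonneg_left (ContinuousLinearMap.le_opNorm _ _) (Real.sqrt_nonneg _)
    _ ≤ Real.sqrt ‖A‖ * (‖S‖ ^ (2 ^ n) * ‖x‖) := by
        refine mul_le_mul_of_nonneg_left (mul_le_mul_of_nonneg_right ?_ (norm_nonneg _))
          (Real.sqrt_nonneg _)
        exact norm_pow_le' S (pow_pos two_pos n)
    _ = (Real.sqrt ‖A‖ * ‖x‖) * ‖S‖ ^ (2 ^ n) := by ring
  rcases eq_or_lt_of_le he_nonneg with he0 | hepos
  · -- e = 0
    have h0 : (a 0) ^ 2 ≤ 0 := by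
      have := hstep 0
      rw [← he0] at this
      simpa using this
    have : a 0 = 0 := by nlinarith [ha_nonneg 0]
    rw [← ha0, this, ← he0, mul_zero]
  · -- e > 0
    have key : ∀ n, (a 0) ^ (2 ^ n) * e ≤ a n * e ^ (2 ^ n) := by
      intro n
      induction n with
      | zero => simp
      | succ n ih =>
          refine le_of_mul_le_mul_right ?_ hepos
          have hpow : (2:ℕ) ^ (n+1) = 2 ^ n * 2 := pow_succ 2 n
          have h2 : (a 0) ^ (2 ^ (n+1)) * e * e = ((a 0) ^ (2 ^ n) * e) ^ 2 := by
            rw [hpow, pow_mul]; ring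
          have h3 : ((a 0) ^ (2 ^ n) * e) ^ 2 ≤ (a n * e ^ (2 ^ n)) ^ 2 :=
            pow_le_pow_left₀ (mul_nonneg (pow_nonneg (ha_nonneg 0) _) he_nonneg) ih 2
          have h4 : (a n * e ^ (2 ^ n)) ^ 2 ≤ (a (n+1) * e) * (e ^ (2 ^ n)) ^ 2 := by
            have := mul_le_mul_of_nonneg_right (hstep n) (sq_nonneg (e ^ (2 ^ n)))
            calc (a n * e ^ (2 ^ n)) ^ 2 = (a n) ^ 2 * (e ^ (2 ^ n)) ^ 2 := by ring
            _ ≤ (a (n+1) * e) * (e ^ (2 ^ n)) ^ 2 := this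
          have h5 : (a (n+1) * e) * (e ^ (2 ^ n)) ^ 2 = a (n+1) * e ^ (2 ^ (n+1)) * e := by
            rw [hpow, pow_mul]; ring
          linarith
    by_contra hcon
    push_neg at hcon
    rw [← ha0] at hcon
    -- hcon : ‖S‖ * e < a 0
    set C := Real.sqrt ‖A‖ * ‖x‖ with hC_def
    have hC : 0 ≤ C := by positivity
    have hbound : ∀ n, (a 0) ^ (2 ^ n) * e ≤ C * (‖S‖ * e) ^ (2 ^ n) := by
      intro n
      calc (a 0) ^ (2 ^ n) * e ≤ a n * e ^ (2 ^ n) := key n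
      _ ≤ (C * ‖S‖ ^ (2 ^ n)) * e ^ (2 ^ n) :=
          mul_le_mul_of_nonneg_right (hae n) (by positivity)
      _ = C * (‖S‖ * e) ^ (2 ^ n) := by rw [mul_pow]; ring
    have ha0pos : 0 < a 0 := lt_of_le_of_lt (by positivity) hcon
    rcases eq_or_lt_of_le (mul_nonneg (norm_nonneg S) he_nonneg) with hB0 | hBpos
    · -- ‖S‖ * e = 0
      have := hbound 0
      rw [← hB0] at this
      simp at this
      nlinarith
    · -- ‖S‖ * e > 0
      have hr : 1 < a 0 / (‖S‖ * e) := (one_lt_div hBpos).2 hcon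
      obtain ⟨m, hm⟩ := pow_unbounded_of_one_lt (C / e) hr
      have hm2 : (a 0 / (‖S‖ * e)) ^ m ≤ (a 0 / (‖S‖ * e)) ^ (2 ^ m) :=
        pow_le_pow_right₀ (le_of_lt hr) (le_of_lt (Nat.lt_two_pow_self (n := m)))
      have hfin : (a 0 / (‖S‖ * e)) ^ (2 ^ m) ≤ C / e := by
        rw [div_pow, div_le_div_iff₀ (by positivity) hepos]
        calc (a 0) ^ (2 ^ m) * e ≤ C * (‖S‖ * e) ^ (2 ^ m) := hbound m
        _ = C * (‖S‖ * e) ^ (2 ^ m) := rfl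
      linarith

lemma star_swap (hA : A.IsPositive) {T Ts : H →L[ℂ] H} (hT : A * Ts = star T * A) :
    star Ts * A = A * T := by
  have h := congrArg star hT
  rw [star_mul, star_mul, hA.isSelfAdjoint.star_eq, star_star] at h
  exact h

lemma normA_T_le (hA : A.IsPositive) {T Ts : H →L[ℂ] H} (hT : A * Ts = star T * A) (x : H) :
    normA A (T x) ≤ Real.sqrt ‖Ts * T‖ * normA A x := by
  have hT2 := star_swap hA hT
  have hS : A * (Ts * T) = star (Ts * T) * A := by
    rw [star_mul, ← mul_assoc, hT, mul_assoc, ← hT2, ← mul_assoc, ← star_mul]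
  have hb := bootstrap hA hS x
  have hsq : (normA A (T x)) ^ 2 ≤ normA A x * normA A ((Ts * T) x) := by
    rw [normA_sq hA]
    have h1 : A (T x) = (star Ts) (A x) := by
      have := congrArg (fun (R : H →L[ℂ] H) => R x) hT2
      simpa using this.symm
    rw [h1, ContinuousLinearMap.star_eq_adjoint, ContinuousLinearMap.adjoint_inner_right]
    have h2 : Ts (T x) = (Ts * T) x := rfl
    rw [h2, reA_symm hA]
    calc (⟪x, A ((Ts * T) x)⟫ : ℂ).re ≤ ‖⟪x, A ((Ts * T) x)⟫‖ := Complex.re_le_norm _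
    _ ≤ normA A x * normA A ((Ts * T) x) := csA hA _ _
  have hsq2 : (normA A (T x)) ^ 2 ≤ ‖Ts * T‖ * (normA A x) ^ 2 := by
    calc (normA A (T x)) ^ 2 ≤ normA A x * normA A ((Ts * T) x) := hsq
    _ ≤ normA A x * (‖Ts * T‖ * normA A x) :=
        mul_le_mul_of_nonneg_left hb (normA_nonneg _ _)
    _ = ‖Ts * T‖ * (normA A x) ^ 2 := by ring
  have h3 := Real.sqrt_le_sqrt hsq2
  rwa [Real.sqrt_sq (normA_nonneg _ _), Real.sqrt_mul (norm_nonneg _),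
    Real.sqrt_sq (normA_nonneg _ _)] at h3

lemma exists_unitA (hA : A.IsPositive) (hA0 : A ≠ 0) : ∃ u : H, normA A u = 1 := by
  have hex : ∃ x : H, (⟪x, A x⟫ : ℂ) ≠ 0 := by
    by_contra hall
    push_neg at hall
    apply hA0
    have h2 : ∀ x : H, (inner ℂ ((A.toLinearMap) x) x : ℂ) = 0 := by
      intro x
      have := hall x
      have h3 : (inner ℂ ((A.toLinearMap) x) x : ℂ) = (starRingEnd ℂ) ⟪x, A x⟫ := by
        rw [← inner_conj_symm]; rfl
      rw [h3, this, map_zero]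
    have h4 := (inner_map_self_eq_zero A.toLinearMap).1 h2
    ext x
    have := congrArg (fun (R : H →ₗ[ℂ] H) => R x) h4
    simpa using this
  obtain ⟨x, hx⟩ := hex
  have hre : 0 < (⟪x, A x⟫ : ℂ).re := by
    rcases lt_or_eq_of_le (reA_nonneg hA x) with h | h
    · exact h
    · exfalso
      apply hx
      have him : (⟪x, A x⟫ : ℂ).im = 0 := by
        have := conjA hA x x
        have h5 := congrArg Complex.im this
        simp only [Complex.conj_im] at h5
        linarith
      exact Complex.ext (by simp [← h]) him
  refine ⟨((((Real.sqrt (⟪x, A x⟫ : ℂ).re)⁻¹ : ℝ)) : ℂ) • x, ?_⟩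
  rw [normA_smul_real]
  rw [normA_def]
  rw [abs_of_nonneg (by positivity)]
  rw [inv_mul_eq_one₀ (by positivity)]

lemma expandA (p q : H) (γ δ : ℂ) (x : H) :
    (⟪q - δ • x, A (p - γ • x)⟫ : ℂ)
      = ⟪q, A p⟫ - γ * ⟪q, A x⟫ - (starRingEnd ℂ) δ * ⟪x, A p⟫
        + (starRingEnd ℂ) δ * γ * ⟪x, A x⟫ := by
  simp only [map_sub, map_smul, inner_sub_left, inner_sub_right, inner_smul_left,
    inner_smul_right]
  ring

end AuxA

open AuxA

theorem stmt10 (A : H →L[ℂ] H) (hA : A.IsPositive) (hA0 : A ≠ 0)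
    (T Ts : H →L[ℂ] H)
    (hT : A.comp Ts = (ContinuousLinearMap.adjoint T).comp A)
    (α : ℂ) (hα : α ≠ 0) :
    (wA A T)^2
      ≤ (max 1 ‖1 - α‖ * (opNormA A T)^2 + wA A (T * T))
          / ‖α‖ := by
  have hαpos : 0 < ‖α‖ := by
    simpa using (norm_pos_iff.mpr hα)
  obtain ⟨u, hu⟩ := exists_unitA hA hA0
  have hT' : A * Ts = star T * A := by
    rw [ContinuousLinearMap.star_eq_adjoint]; exact hT
  have hT'' : A * T = star Ts * A := (star_swap hA hT').symm
  have hC1 : ∀ x, normA A (T x) ≤ Real.sqrt ‖Ts * T‖ * normA A x := normA_T_le hA hT'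
  have hC2 : ∀ x, normA A (Ts x) ≤ Real.sqrt ‖T * Ts‖ * normA A x := normA_T_le hA hT''
  set N := opNormA A T with hN_def
  set W := wA A (T * T) with hW_def
  set m := max 1 (‖1 - α‖) with hm_def
  have hm1 : (1:ℝ) ≤ m := le_max_left _ _
  have hm2 : ‖1 - α‖ ≤ m := le_max_right _ _
  -- facts about N
  have hbddN : BddAbove {r : ℝ | ∃ x : H, normA A x = 1 ∧ r = normA A (T x)} := by
    refine ⟨Real.sqrt ‖Ts * T‖, ?_⟩
    rintro r ⟨x, hx, rfl⟩
    simpa [hx] using hC1 x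
  have hN_le : ∀ x : H, normA A x = 1 → normA A (T x) ≤ N :=
    fun x hx => le_csSup hbddN ⟨x, hx, rfl⟩
  have hN_nonneg : 0 ≤ N :=
    le_trans (normA_nonneg A (T u)) (hN_le u hu)
  have hN_gen : ∀ y : H, normA A (T y) ≤ N * normA A y := by
    intro y
    rcases eq_or_lt_of_le (normA_nonneg A y) with hy | hy
    · have h1 := hC1 y
      rw [← hy, mul_zero] at h1
      have h0 : normA A (T y) = 0 := le_antisymm h1 (normA_nonneg _ _)
      rw [h0, ← hy, mul_zero]
    · set t := normA A y with ht_def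
      have hu1 : normA A ((((t⁻¹ : ℝ)) : ℂ) • y) = 1 := by
        rw [normA_smul_real, abs_of_nonneg (inv_nonneg.2 hy.le), inv_mul_cancel₀ hy.ne']
      have h1 := hN_le _ hu1
      rw [map_smul, normA_smul_real, abs_of_nonneg (inv_nonneg.2 hy.le)] at h1
      calc normA A (T y) = t * (t⁻¹ * normA A (T y)) := by
            field_simp
      _ ≤ t * N := mul_le_mul_of_nonneg_left h1 hy.le
      _ = N * t := mul_comm _ _
  have hTs_le : ∀ x : H, normA A x = 1 → normA A (Ts x) ≤ N := by
    intro x hx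
    rcases eq_or_lt_of_le (normA_nonneg A (Ts x)) with hb | hb
    · rw [← hb]; exact hN_nonneg
    · have hsq : (normA A (Ts x)) ^ 2 ≤ N * normA A (Ts x) := by
        rw [normA_sq hA]
        have h1 : A (Ts x) = (star T) (A x) := by
          have := congrArg (fun (R : H →L[ℂ] H) => R x) hT'
          simpa using this
        rw [h1, ContinuousLinearMap.star_eq_adjoint, ContinuousLinearMap.adjoint_inner_right, reA_symm hA]
        calc (⟪x, A (T (Ts x))⟫ : ℂ).re ≤ ‖⟪x, A (T (Ts x))⟫‖ :=
              Complex.re_le_norm _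
        _ ≤ normA A x * normA A (T (Ts x)) := csA hA _ _
        _ = normA A (T (Ts x)) := by rw [hx, one_mul]
        _ ≤ N * normA A (Ts x) := hN_gen _
      nlinarith
  -- facts about W
  have hbddW : BddAbove {r : ℝ | ∃ x : H, normA A x = 1 ∧
      r = ‖innerA A ((T * T) x) x‖} := by
    refine ⟨Real.sqrt ‖Ts * T‖ * Real.sqrt ‖Ts * T‖, ?_⟩
    rintro r ⟨x, hx, rfl⟩
    have h1 : ‖innerA A ((T * T) x) x‖ ≤ normA A x * normA A ((T * T) x) :=
      csA hA _ _
    have h2 : normA A ((T * T) x) ≤ Real.sqrt ‖Ts * T‖ * normA A (T x) := hC1 (T x)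
    have h3 := hC1 x
    rw [hx, mul_one] at h3
    calc ‖innerA A ((T * T) x) x‖ ≤ normA A x * normA A ((T * T) x) := h1
    _ = normA A ((T * T) x) := by rw [hx, one_mul]
    _ ≤ Real.sqrt ‖Ts * T‖ * normA A (T x) := h2
    _ ≤ Real.sqrt ‖Ts * T‖ * Real.sqrt ‖Ts * T‖ :=
        mul_le_mul_of_nonneg_left h3 (Real.sqrt_nonneg _)
  have hW_ge : ∀ x : H, normA A x = 1 → ‖innerA A ((T * T) x) x‖ ≤ W :=
    fun x hx => le_csSup hbddW ⟨x, hx, rfl⟩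
  have hW_nonneg : 0 ≤ W :=
    le_trans (norm_nonneg _) (hW_ge u hu)
  -- key pointwise estimate
  have hkey : ∀ x : H, normA A x = 1 →
      ‖α‖ * ‖(⟪x, A (T x)⟫ : ℂ)‖ ^ 2 ≤ m * N ^ 2 + W := by
    intro x hx
    set c : ℂ := (⟪x, A (T x)⟫ : ℂ) with hc_def
    set d : ℂ := (⟪x, A (T (T x))⟫ : ℂ) with hd_def
    set t : ℝ := (‖c‖) ^ 2 with ht_def
    have hxx : (⟪x, A x⟫ : ℂ) = 1 := by
      have hre : (⟪x, A x⟫ : ℂ).re = 1 := by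
        have h1 := (normA_sq hA x).symm
        rw [hx, one_pow] at h1
        exact h1
      have him : (⟪x, A x⟫ : ℂ).im = 0 := by
        have h5 := congrArg Complex.im (conjA hA x x)
        simp only [Complex.conj_im] at h5
        linarith
      exact Complex.ext (by rw [hre, Complex.one_re]) (by rw [him, Complex.one_im])
    have hATs : A (Ts x) = (star T) (A x) := by
      have := congrArg (fun (R : H →L[ℂ] H) => R x) hT'
      simpa using this
    have hax2 : (⟪T x, A x⟫ : ℂ) = (starRingEnd ℂ) c := (conjA hA (T x) x).symm
    have hbx : (⟪x, A (Ts x)⟫ : ℂ) = (starRingEnd ℂ) c := by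
      rw [hATs, ContinuousLinearMap.star_eq_adjoint, ContinuousLinearMap.adjoint_inner_right]
      exact hax2
    have hbx' : (⟪Ts x, A x⟫ : ℂ) = c := by
      have := (conjA hA (Ts x) x).symm
      rw [this, hbx]
      simp
    have hab : (⟪Ts x, A (T x)⟫ : ℂ) = d := by
      have h1 : (⟪T x, A (Ts x)⟫ : ℂ) = (starRingEnd ℂ) d := by
        rw [hATs, ContinuousLinearMap.star_eq_adjoint, ContinuousLinearMap.adjoint_inner_right]
        exact (conjA hA (T (T x)) x).symm
      have h2 := (conjA hA (Ts x) (T x)).symm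
      rw [h2, h1]
      simp
    -- the two defect vectors
    have huv : (⟪Ts x - ((starRingEnd ℂ) c) • x, A (T x - c • x)⟫ : ℂ) = d - c ^ 2 := by
      rw [expandA, hab, hbx', hxx, ← hc_def]
      simp only [Complex.conj_conj]
      ring
    have hu2 : (normA A (T x - c • x)) ^ 2 = (normA A (T x)) ^ 2 - t := by
      rw [normA_sq hA, expandA, hax2, ← hc_def, hxx]
      have : (⟪T x, A (T x)⟫ - c * (starRingEnd ℂ) c - (starRingEnd ℂ) c * c
          + (starRingEnd ℂ) c * c * 1 : ℂ) = ⟪T x, A (T x)⟫ - c * (starRingEnd ℂ) c := by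
        ring
      rw [this, Complex.mul_conj, Complex.sub_re, Complex.ofReal_re, normA_sq hA,
        ht_def, Complex.sq_norm]
    have hv2 : (normA A (Ts x - ((starRingEnd ℂ) c) • x)) ^ 2 = (normA A (Ts x)) ^ 2 - t := by
      rw [normA_sq hA, expandA, hbx, hbx', hxx]
      have : (⟪Ts x, A (Ts x)⟫ - (starRingEnd ℂ) c * c
          - (starRingEnd ℂ) ((starRingEnd ℂ) c) * (starRingEnd ℂ) c
          + (starRingEnd ℂ) ((starRingEnd ℂ) c) * (starRingEnd ℂ) c * 1 : ℂ)
          = ⟪Ts x, A (Ts x)⟫ - c * (starRingEnd ℂ) c := by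
        simp only [Complex.conj_conj]
        ring
      rw [this, Complex.mul_conj, Complex.sub_re, Complex.ofReal_re, normA_sq hA,
        ht_def, Complex.sq_norm]
    have hNa : normA A (T x) ≤ N := hN_le x hx
    have hNb : normA A (Ts x) ≤ N := hTs_le x hx
    have habs_c : ‖c‖ ≤ normA A (T x) := by
      have h1 := csA hA x (T x)
      rwa [hx, one_mul] at h1
    have ht_le : t ≤ N ^ 2 := by
      rw [ht_def]
      have := le_trans habs_c hNa
      exact pow_le_pow_left₀ (norm_nonneg _) this 2
    have ht_nonneg : 0 ≤ t := sq_nonneg _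
    have hu_le : normA A (T x - c • x) ≤ Real.sqrt (N ^ 2 - t) := by
      rw [← Real.sqrt_sq (normA_nonneg A (T x - c • x)), hu2]
      refine Real.sqrt_le_sqrt ?_
      have : (normA A (T x)) ^ 2 ≤ N ^ 2 := pow_le_pow_left₀ (normA_nonneg _ _) hNa 2
      linarith
    have hv_le : normA A (Ts x - ((starRingEnd ℂ) c) • x) ≤ Real.sqrt (N ^ 2 - t) := by
      rw [← Real.sqrt_sq (normA_nonneg A _), hv2]
      refine Real.sqrt_le_sqrt ?_
      have : (normA A (Ts x)) ^ 2 ≤ N ^ 2 := pow_le_pow_left₀ (normA_nonneg _ _) hNb 2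
      linarith
    have hdc : ‖d - c ^ 2‖ ≤ N ^ 2 - t := by
      rw [← huv]
      calc ‖(⟪Ts x - ((starRingEnd ℂ) c) • x, A (T x - c • x)⟫ : ℂ)‖
          ≤ normA A (Ts x - ((starRingEnd ℂ) c) • x) * normA A (T x - c • x) := csA hA _ _
      _ ≤ Real.sqrt (N ^ 2 - t) * Real.sqrt (N ^ 2 - t) :=
          mul_le_mul hv_le hu_le (normA_nonneg _ _) (Real.sqrt_nonneg _)
      _ = N ^ 2 - t := Real.mul_self_sqrt (by
            have : (normA A (T x)) ^ 2 ≤ N ^ 2 := pow_le_pow_left₀ (normA_nonneg _ _) hNa 2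
            nlinarith [sq_nonneg (normA A (T x)), hu2, sq_nonneg (normA A (T x - c • x))])
    have hd_le : ‖d‖ ≤ W := by
      have := hW_ge x hx
      exact this
    have htri : ‖α‖ * t ≤ ‖d - c ^ 2‖ + ‖d‖
        + ‖1 - α‖ * t := by
      have h1 : (α * c ^ 2 : ℂ) = -(d - c ^ 2) + d - (1 - α) * c ^ 2 := by ring
      calc ‖α‖ * t = ‖α * c ^ 2‖ := by
            rw [norm_mul, norm_pow, ht_def]
      _ = ‖-(d - c ^ 2) + d - (1 - α) * c ^ 2‖ := by rw [h1]
      _ ≤ ‖-(d - c ^ 2) + d‖ + ‖(1 - α) * c ^ 2‖ :=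
          norm_sub_le _ _
      _ ≤ (‖-(d - c ^ 2)‖ + ‖d‖) + ‖(1 - α) * c ^ 2‖ :=
          add_le_add_left (norm_add_le _ _) _
      _ = ‖d - c ^ 2‖ + ‖d‖ + ‖1 - α‖ * t := by
          rw [norm_neg, norm_mul, norm_pow, ht_def]
    have harith : ‖d - c ^ 2‖ + ‖d‖ + ‖1 - α‖ * t
        ≤ m * N ^ 2 + W := by
      have hfac1 : 0 ≤ (m - 1) * (N ^ 2 - t) :=
        mul_nonneg (by linarith) (by linarith)
      have hfac2 : 0 ≤ (m - ‖1 - α‖) * t :=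
        mul_nonneg (by linarith) ht_nonneg
      nlinarith [hdc, hd_le]
    linarith
  -- conclude
  set K := (m * N ^ 2 + W) / ‖α‖ with hK_def
  have hK_nonneg : 0 ≤ K := by
    apply div_nonneg _ (norm_nonneg _)
    have : 0 ≤ m * N ^ 2 := mul_nonneg (by linarith) (sq_nonneg _)
    linarith
  have helem : ∀ r ∈ {r : ℝ | ∃ x : H, normA A x = 1 ∧
      r = ‖innerA A (T x) x‖}, r ≤ Real.sqrt K := by
    rintro r ⟨x, hx, rfl⟩
    have h1 := hkey x hx
    have h2 : (‖innerA A (T x) x‖) ^ 2 ≤ K := by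
      rw [hK_def, le_div_iff₀ hαpos]
      calc (‖innerA A (T x) x‖) ^ 2 * ‖α‖
          = ‖α‖ * ‖(⟪x, A (T x)⟫ : ℂ)‖ ^ 2 := by
            rw [mul_comm]; rfl
      _ ≤ m * N ^ 2 + W := h1
    calc ‖innerA A (T x) x‖
        = Real.sqrt ((‖innerA A (T x) x‖) ^ 2) :=
          (Real.sqrt_sq (norm_nonneg _)).symm
    _ ≤ Real.sqrt K := Real.sqrt_le_sqrt h2
  have hne : {r : ℝ | ∃ x : H, normA A x = 1 ∧
      r = ‖innerA A (T x) x‖}.Nonempty :=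
    ⟨‖innerA A (T u) u‖, u, hu, rfl⟩
  have hwle : wA A T ≤ Real.sqrt K := csSup_le hne helem
  have hwnn : 0 ≤ wA A T := by
    refine le_trans (norm_nonneg (innerA A (T u) u)) ?_
    exact le_csSup ⟨Real.sqrt K, helem⟩ ⟨u, hu, rfl⟩
  calc (wA A T) ^ 2 ≤ (Real.sqrt K) ^ 2 := pow_le_pow_left₀ hwnn hwle 2
  _ = K := Real.sq_sqrt hK_nonneg
end
end

section
/- Let B and C be bounded linear operators on H admitting A-adjoints. Then (1/2)·max{ (w_A(B+C))² + (c_A(B−C))², (w_A(B−C))² + (c_A(B+C))² } ≤ (w_{A,e}(B,C))². -/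
noncomputable section

open scoped ComplexInnerProductSpace

variable {H : Type*} [NormedAddCommGroup H] [InnerProductSpace ℂ H] [CompleteSpace H]

/-! ### Auxiliary lemmas -/

/-- The semi-inner product from `A` as a `PreInnerProductSpace.Core`. -/
def coreA (A : H →L[ℂ] H) (hA : A.IsPositive) : PreInnerProductSpace.Core ℂ H where
  inner x y := ⟪x, A y⟫
  conj_inner_symm x y := by
    have hs := (ContinuousLinearMap.isSelfAdjoint_iff_isSymmetric.mp hA.isSelfAdjoint)
    calc (starRingEnd ℂ) ⟪y, A x⟫ = ⟪A x, y⟫ := by rw [inner_conj_symm]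
    _ = ⟪x, A y⟫ := hs x y
  re_inner_nonneg x := by
    have h := hA.re_inner_nonneg_left x
    rwa [inner_re_symm] at h
  add_left x y z := inner_add_left _ _ _
  smul_left x y r := inner_smul_left _ _ _

lemma innerA_self_nonneg (A : H →L[ℂ] H) (hA : A.IsPositive) (x : H) :
    0 ≤ (innerA A x x).re := (coreA A hA).re_inner_nonneg x

lemma normA_nonneg (A : H →L[ℂ] H) (x : H) : 0 ≤ normA A x := Real.sqrt_nonneg _

lemma normA_sq (A : H →L[ℂ] H) (hA : A.IsPositive) (x : H) :
    normA A x ^ 2 = (innerA A x x).re :=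
  Real.sq_sqrt (innerA_self_nonneg A hA x)

/-- Cauchy–Schwarz for the semi-inner product. -/
lemma semiCS (A : H →L[ℂ] H) (hA : A.IsPositive) (x y : H) :
    ‖innerA A x y‖ ≤ normA A x * normA A y := by
  have h : ‖(⟪y, A x⟫ : ℂ)‖ * ‖(⟪x, A y⟫ : ℂ)‖
      ≤ ((⟪y, A y⟫ : ℂ)).re * ((⟪x, A x⟫ : ℂ)).re :=
    @InnerProductSpace.Core.inner_mul_inner_self_le ℂ H _ _ _ (coreA A hA) y x
  have e : (⟪x, A y⟫ : ℂ) = starRingEnd ℂ ⟪y, A x⟫ := ((coreA A hA).conj_inner_symm x y).symm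
  rw [e, RCLike.norm_conj] at h
  have h2 : ‖innerA A x y‖ ^ 2 ≤ (normA A x * normA A y) ^ 2 := by
    rw [mul_pow, normA_sq A hA, normA_sq A hA]
    calc ‖innerA A x y‖ ^ 2 = ‖(⟪y, A x⟫ : ℂ)‖ * ‖(⟪y, A x⟫ : ℂ)‖ := by
          rw [innerA]; ring
    _ ≤ (innerA A y y).re * (innerA A x x).re := h
    _ = (innerA A x x).re * (innerA A y y).re := mul_comm _ _
  exact (pow_le_pow_iff_left₀ (norm_nonneg _)
    (mul_nonneg (normA_nonneg A x) (normA_nonneg A y)) two_ne_zero).mp h2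

lemma normA_le (A : H →L[ℂ] H) (y : H) : normA A y ≤ Real.sqrt ‖A‖ * ‖y‖ := by
  have h1 : (innerA A y y).re ≤ ‖A‖ * ‖y‖ ^ 2 := by
    calc (innerA A y y).re ≤ ‖innerA A y y‖ := Complex.re_le_norm _
    _ = ‖(⟪y, A y⟫ : ℂ)‖ := rfl
    _ ≤ ‖y‖ * ‖A y‖ := norm_inner_le_norm _ _
    _ ≤ ‖y‖ * (‖A‖ * ‖y‖) := by
        have := A.le_opNorm y
        nlinarith [norm_nonneg y]
    _ = ‖A‖ * ‖y‖ ^ 2 := by ring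
  calc normA A y ≤ Real.sqrt (‖A‖ * ‖y‖ ^ 2) := Real.sqrt_le_sqrt h1
  _ = Real.sqrt ‖A‖ * ‖y‖ := by
      rw [Real.sqrt_mul (norm_nonneg A), Real.sqrt_sq (norm_nonneg y)]

/-- Powers of an `A`-selfadjoint-type operator. -/
lemma pow_comm_A (A D : H →L[ℂ] H) (hD : A * D = star D * A) (n : ℕ) :
    A * D ^ n = (star D) ^ n * A := by
  induction n with
  | zero => simp
  | succ n ih =>
    rw [pow_succ, ← mul_assoc, ih, mul_assoc, hD, ← mul_assoc, ← pow_succ]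

lemma step_ineq (A : H →L[ℂ] H) (hA : A.IsPositive) (D : H →L[ℂ] H)
    (hD : A * D = star D * A) (m : ℕ) (x : H) :
    normA A ((D ^ m) x) ^ 2 ≤ normA A x * normA A ((D ^ (2 * m)) x) := by
  have key : (innerA A ((D ^ m) x) ((D ^ m) x)).re
      = (innerA A x ((D ^ (2 * m)) x)).re := by
    have h1 : A ((D ^ m) x) = (star (D ^ m)) (A x) := by
      have := congrArg (fun T : H →L[ℂ] H => T x) (pow_comm_A A D hD m)
      simpa [ContinuousLinearMap.mul_apply, star_pow] using this
    have h2 : (⟪(D ^ m) x, A ((D ^ m) x)⟫ : ℂ) = ⟪(D ^ (2 * m)) x, A x⟫ := by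
      rw [h1, ContinuousLinearMap.star_eq_adjoint, ContinuousLinearMap.adjoint_inner_right]
      congr 1
      rw [← ContinuousLinearMap.mul_apply, ← pow_add]
      norm_num [two_mul]
    simp only [innerA, h2]
  rw [normA_sq A hA, key]
  calc (innerA A x ((D ^ (2 * m)) x)).re
      ≤ ‖innerA A x ((D ^ (2 * m)) x)‖ := Complex.re_le_norm _
  _ ≤ normA A x * normA A ((D ^ (2 * m)) x) := semiCS A hA _ _

lemma iter_ineq (A : H →L[ℂ] H) (hA : A.IsPositive) (D : H →L[ℂ] H)
    (hD : A * D = star D * A) (x : H) (n : ℕ) :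
    normA A (D x) ^ (2 ^ n) ≤ normA A ((D ^ (2 ^ n)) x) * normA A x ^ (2 ^ n - 1) := by
  induction n with
  | zero => simp
  | succ n ih =>
    have h2n : 1 ≤ 2 ^ n := Nat.one_le_two_pow
    have e1 : 2 ^ (n + 1) = (2 ^ n) * 2 := by ring
    calc normA A (D x) ^ (2 ^ (n + 1))
        = (normA A (D x) ^ (2 ^ n)) ^ 2 := by rw [e1, pow_mul]
    _ ≤ (normA A ((D ^ (2 ^ n)) x) * normA A x ^ (2 ^ n - 1)) ^ 2 := by
        apply pow_le_pow_left₀ (pow_nonneg (normA_nonneg A _) _) ih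
    _ = normA A ((D ^ (2 ^ n)) x) ^ 2 * normA A x ^ (2 * (2 ^ n - 1)) := by
        rw [mul_pow, ← pow_mul]; ring_nf
    _ ≤ (normA A x * normA A ((D ^ (2 * 2 ^ n)) x)) * normA A x ^ (2 * (2 ^ n - 1)) := by
        apply mul_le_mul_of_nonneg_right (step_ineq A hA D hD _ x)
          (pow_nonneg (normA_nonneg A _) _)
    _ = normA A ((D ^ (2 ^ (n + 1))) x) * normA A x ^ (2 ^ (n + 1) - 1) := by
        have e2 : 2 * 2 ^ n = 2 ^ (n + 1) := by ring
        have e3 : 2 ^ (n + 1) - 1 = 1 + 2 * (2 ^ n - 1) := by omega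
        rw [e2, e3, pow_add, pow_one]; ring

/-- The key bound: an `A`-selfadjoint-type operator is `A`-bounded with bound `‖D‖`. -/
lemma normA_map_le_of_selfadj (A : H →L[ℂ] H) (hA : A.IsPositive) (D : H →L[ℂ] H)
    (hD : A * D = star D * A) (x : H) :
    normA A (D x) ≤ ‖D‖ * normA A x := by
  by_contra hcon
  push_neg at hcon
  have hDx : 0 ≤ normA A (D x) := normA_nonneg A _
  have hx : 0 ≤ normA A x := normA_nonneg A _
  -- handle degenerate cases
  rcases eq_or_lt_of_le hx with hx0 | hx0
  · -- normA A x = 0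
    have h := step_ineq A hA D hD 1 x
    simp only [pow_one, ← hx0, zero_mul] at h
    have : normA A (D x) = 0 := by nlinarith
    rw [this, ← hx0, mul_zero] at hcon
    exact absurd hcon (lt_irrefl 0)
  have hD0 : 0 < ‖D‖ := by
    rcases (norm_nonneg D).eq_or_lt with h0 | h0
    · exfalso
      have : D = 0 := by rwa [eq_comm, norm_eq_zero] at h0
      rw [this] at hcon
      simp only [ContinuousLinearMap.zero_apply, norm_zero, zero_mul] at hcon
      have : normA A (0 : H) = 0 := by simp [normA, innerA]
      rw [this] at hcon; exact absurd hcon (lt_irrefl 0)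
    · exact h0
  set r : ℝ := normA A (D x) / (‖D‖ * normA A x) with hr
  have hden : 0 < ‖D‖ * normA A x := mul_pos hD0 hx0
  have hr1 : 1 < r := (one_lt_div hden).mpr hcon
  set K : ℝ := Real.sqrt ‖A‖ * ‖x‖ with hK
  have hbound : ∀ n : ℕ, r ^ (2 ^ n) ≤ K / normA A x := by
    intro n
    have h1 := iter_ineq A hA D hD x n
    have h2 : normA A ((D ^ (2 ^ n)) x) ≤ K * ‖D‖ ^ (2 ^ n) := by
      calc normA A ((D ^ (2 ^ n)) x) ≤ Real.sqrt ‖A‖ * ‖(D ^ (2 ^ n)) x‖ := normA_le A _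
      _ ≤ Real.sqrt ‖A‖ * (‖D ^ (2 ^ n)‖ * ‖x‖) := by
          apply mul_le_mul_of_nonneg_left ((D ^ (2 ^ n)).le_opNorm x) (Real.sqrt_nonneg _)
      _ ≤ Real.sqrt ‖A‖ * (‖D‖ ^ (2 ^ n) * ‖x‖) := by
          apply mul_le_mul_of_nonneg_left _ (Real.sqrt_nonneg _)
          exact mul_le_mul_of_nonneg_right (norm_pow_le' D (by positivity)) (norm_nonneg x)
      _ = K * ‖D‖ ^ (2 ^ n) := by rw [hK]; ring
    have h3 : normA A (D x) ^ (2 ^ n) ≤ K * ‖D‖ ^ (2 ^ n) * normA A x ^ (2 ^ n - 1) := by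
      calc normA A (D x) ^ (2 ^ n) ≤ normA A ((D ^ (2 ^ n)) x) * normA A x ^ (2 ^ n - 1) := h1
      _ ≤ K * ‖D‖ ^ (2 ^ n) * normA A x ^ (2 ^ n - 1) :=
          mul_le_mul_of_nonneg_right h2 (pow_nonneg hx _)
    have hrw : normA A (D x) = r * (‖D‖ * normA A x) := by
      rw [hr, div_mul_cancel₀ _ hden.ne']
    rw [hrw, mul_pow, mul_pow] at h3
    have hsplit : normA A x ^ (2 ^ n) = normA A x ^ (2 ^ n - 1) * normA A x := by
      rw [← pow_succ]
      congr 1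
      have := Nat.one_le_two_pow (n := n)
      omega
    rw [hsplit] at h3
    rw [le_div_iff₀ hx0]
    have hpos : 0 < ‖D‖ ^ (2 ^ n) * normA A x ^ (2 ^ n - 1) :=
      mul_pos (pow_pos hD0 _) (pow_pos hx0 _)
    have h4 : r ^ (2 ^ n) * normA A x * (‖D‖ ^ (2 ^ n) * normA A x ^ (2 ^ n - 1))
        ≤ K * (‖D‖ ^ (2 ^ n) * normA A x ^ (2 ^ n - 1)) := by nlinarith [h3]
    exact le_of_mul_le_mul_right h4 hpos
  obtain ⟨n, hn⟩ := pow_unbounded_of_one_lt (K / normA A x) hr1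
  have hle : r ^ n ≤ r ^ (2 ^ n) :=
    pow_le_pow_right₀ hr1.le (Nat.lt_two_pow_self).le
  exact absurd ((hbound n).trans_lt (hn.trans_le hle)) (lt_irrefl _)

lemma A_mul_comm (A : H →L[ℂ] H) (hA : A.IsPositive) (B Bs : H →L[ℂ] H)
    (hB : A.comp Bs = (ContinuousLinearMap.adjoint B).comp A) :
    A * B = star Bs * A := by
  have hAadj : ContinuousLinearMap.adjoint A = A := by
    rw [← ContinuousLinearMap.star_eq_adjoint]; exact hA.isSelfAdjoint
  have h := congrArg ContinuousLinearMap.adjoint hB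
  rw [ContinuousLinearMap.adjoint_comp, ContinuousLinearMap.adjoint_comp, hAadj,
    ContinuousLinearMap.adjoint_adjoint] at h
  rw [ContinuousLinearMap.star_eq_adjoint]
  exact h.symm

lemma normA_B_bound (A : H →L[ℂ] H) (hA : A.IsPositive) (B Bs : H →L[ℂ] H)
    (hB : A.comp Bs = (ContinuousLinearMap.adjoint B).comp A) :
    ∃ c : ℝ, 0 ≤ c ∧ ∀ x : H, normA A (B x) ≤ c * normA A x := by
  set D : H →L[ℂ] H := Bs * B with hDdef
  have hAB : A * B = star Bs * A := A_mul_comm A hA B Bs hB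
  have hABs : A * Bs = star B * A := by
    rw [ContinuousLinearMap.star_eq_adjoint]; exact hB
  have hD : A * D = star D * A := by
    rw [hDdef, star_mul, ← mul_assoc, mul_assoc (star B), ← hAB, ← mul_assoc, ← hABs, mul_assoc]
  refine ⟨Real.sqrt ‖D‖, Real.sqrt_nonneg _, fun x => ?_⟩
  have key : normA A (B x) ^ 2 ≤ ‖D‖ * normA A x ^ 2 := by
    have h1 : A (B x) = (star Bs) (A x) := by
      have := congrArg (fun T : H →L[ℂ] H => T x) hAB
      simpa [ContinuousLinearMap.mul_apply] using this
    have h2 : (innerA A (B x) (B x)).re = (innerA A x (D x)).re := by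
      simp only [innerA]
      rw [h1, ContinuousLinearMap.star_eq_adjoint, ContinuousLinearMap.adjoint_inner_right]
      rfl
    have h3 : (innerA A x (D x)).re ≤ normA A x * normA A (D x) :=
      (Complex.re_le_norm _).trans (semiCS A hA _ _)
    have h4 : normA A (D x) ≤ ‖D‖ * normA A x := normA_map_le_of_selfadj A hA D hD x
    have h5 := normA_nonneg A x
    rw [normA_sq A hA, h2]
    nlinarith [normA_nonneg A (D x)]
  calc normA A (B x) = Real.sqrt (normA A (B x) ^ 2) :=
        (Real.sqrt_sq (normA_nonneg A _)).symm
  _ ≤ Real.sqrt (‖D‖ * normA A x ^ 2) := Real.sqrt_le_sqrt key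
  _ = Real.sqrt ‖D‖ * normA A x := by
      rw [Real.sqrt_mul (norm_nonneg D), Real.sqrt_sq (normA_nonneg A x)]

lemma exists_unit_vector (A : H →L[ℂ] H) (hA : A.IsPositive) (hA0 : A ≠ 0) :
    ∃ x : H, normA A x = 1 := by
  have hy : ∃ y : H, (innerA A y y).re ≠ 0 := by
    by_contra hcon
    push_neg at hcon
    apply hA0
    have h0 : (∀ y : H, (⟪(A : H →ₗ[ℂ] H) y, y⟫ : ℂ) = 0) → (A : H →ₗ[ℂ] H) = 0 :=
      (inner_map_self_eq_zero (A : H →ₗ[ℂ] H)).mp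
    have hmain : ∀ y : H, (⟪A y, y⟫ : ℂ) = 0 := ?_
    · ext x
      have := LinearMap.congr_fun (h0 hmain) x
      simpa using this
    intro y
    have hreal : (starRingEnd ℂ) (⟪y, A y⟫ : ℂ) = ⟪y, A y⟫ := (coreA A hA).conj_inner_symm y y
    have hz : (⟪y, A y⟫ : ℂ) = 0 := by
      have h1 : ((⟪y, A y⟫ : ℂ).re : ℂ) = ⟪y, A y⟫ := Complex.conj_eq_iff_re.mp hreal
      rw [← h1]
      norm_cast
      exact hcon y
    rw [← inner_conj_symm, ← hreal, hz]
    simp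
  obtain ⟨y, hy⟩ := hy
  have hpos : 0 < (innerA A y y).re := lt_of_le_of_ne (innerA_self_nonneg A hA y) (Ne.symm hy)
  set t : ℝ := normA A y with ht
  have ht0 : 0 < t := Real.sqrt_pos.mpr hpos
  refine ⟨((t⁻¹ : ℝ) : ℂ) • y, ?_⟩
  have hsm : innerA A (((t⁻¹ : ℝ) : ℂ) • y) (((t⁻¹ : ℝ) : ℂ) • y)
      = ((t⁻¹ * t⁻¹ : ℝ) : ℂ) * innerA A y y := by
    simp only [innerA, map_smul, inner_smul_left, inner_smul_right]
    rw [Complex.conj_ofReal]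
    push_cast
    ring
  unfold normA
  rw [hsm]
  have hre : (((t⁻¹ * t⁻¹ : ℝ) : ℂ) * innerA A y y).re = (t⁻¹ * t⁻¹) * (innerA A y y).re := by
    simp [Complex.mul_re]
  rw [hre]
  have ht2 : (innerA A y y).re = t * t := by
    rw [ht]
    simp only [normA]
    exact (Real.mul_self_sqrt (innerA_self_nonneg A hA y)).symm
  rw [ht2]
  have : t⁻¹ * t⁻¹ * (t * t) = 1 := by field_simp
  rw [this, Real.sqrt_one]

theorem stmt13 (A : H →L[ℂ] H) (hA : A.IsPositive) (hA0 : A ≠ 0)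
    (B C Bs Cs : H →L[ℂ] H)
    (hB : A.comp Bs = (ContinuousLinearMap.adjoint B).comp A)
    (hC : A.comp Cs = (ContinuousLinearMap.adjoint C).comp A) :
    (1/2) * max ((wA A (B + C))^2 + (cA A (B - C))^2)
        ((wA A (B - C))^2 + (cA A (B + C))^2)
      ≤ (wAe A B C)^2 := by
  obtain ⟨x0, hx0⟩ := exists_unit_vector A hA hA0
  obtain ⟨cb, hcb0, hcb⟩ := normA_B_bound A hA B Bs hB
  obtain ⟨cc, hcc0, hcc⟩ := normA_B_bound A hA C Cs hC
  set M : ℝ := wAe A B C with hM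
  -- pointwise bounds on the numerical values
  have habsB : ∀ x : H, normA A x = 1 → ‖innerA A (B x) x‖ ≤ cb := by
    intro x hx
    calc ‖innerA A (B x) x‖ ≤ normA A (B x) * normA A x := semiCS A hA _ _
    _ = normA A (B x) := by rw [hx, mul_one]
    _ ≤ cb * normA A x := hcb x
    _ = cb := by rw [hx, mul_one]
  have habsC : ∀ x : H, normA A x = 1 → ‖innerA A (C x) x‖ ≤ cc := by
    intro x hx
    calc ‖innerA A (C x) x‖ ≤ normA A (C x) * normA A x := semiCS A hA _ _
    _ = normA A (C x) := by rw [hx, mul_one]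
    _ ≤ cc * normA A x := hcc x
    _ = cc := by rw [hx, mul_one]
  -- the wAe set is bounded above
  have hbddAe : BddAbove {r : ℝ | ∃ x : H, normA A x = 1 ∧
      r = Real.sqrt ((‖innerA A (B x) x‖)^2 + (‖innerA A (C x) x‖)^2)} := by
    refine ⟨Real.sqrt (cb^2 + cc^2), ?_⟩
    rintro r ⟨x, hx, rfl⟩
    apply Real.sqrt_le_sqrt
    have h1 := habsB x hx
    have h2 := habsC x hx
    have h3 := norm_nonneg (innerA A (B x) x)
    have h4 := norm_nonneg (innerA A (C x) x)
    nlinarith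
  have hMle : ∀ x : H, normA A x = 1 →
      (‖innerA A (B x) x‖)^2 + (‖innerA A (C x) x‖)^2 ≤ M^2 := by
    intro x hx
    have hmem : Real.sqrt ((‖innerA A (B x) x‖)^2
        + (‖innerA A (C x) x‖)^2) ≤ M := le_csSup hbddAe ⟨x, hx, rfl⟩
    have hs : 0 ≤ (‖innerA A (B x) x‖)^2 + (‖innerA A (C x) x‖)^2 := by
      positivity
    calc (‖innerA A (B x) x‖)^2 + (‖innerA A (C x) x‖)^2
        = Real.sqrt ((‖innerA A (B x) x‖)^2
            + (‖innerA A (C x) x‖)^2) ^ 2 := (Real.sq_sqrt hs).symm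
    _ ≤ M ^ 2 := pow_le_pow_left₀ (Real.sqrt_nonneg _) hmem 2
  -- parallelogram identity for the numerical values
  have hpar : ∀ x : H, normA A x = 1 →
      (‖innerA A ((B + C) x) x‖)^2 + (‖innerA A ((B - C) x) x‖)^2
      ≤ 2 * M^2 := by
    intro x hx
    set a : ℂ := innerA A (B x) x with ha
    set b : ℂ := innerA A (C x) x with hb
    have hadd : innerA A ((B + C) x) x = a + b := by
      simp only [innerA, ha, hb, ContinuousLinearMap.add_apply, map_add, inner_add_right]
    have hsub : innerA A ((B - C) x) x = a - b := by
      simp only [innerA, ha, hb, ContinuousLinearMap.sub_apply, map_sub, inner_sub_right]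
    have hplg := parallelogram_law_with_norm ℂ a b
    have hlaw : (‖a + b‖)^2 + (‖a - b‖)^2
        = 2 * ((‖a‖)^2 + (‖b‖)^2) := by
      exact hplg
    rw [hadd, hsub, hlaw]
    have := hMle x hx
    linarith
  -- generic pair inequality
  have pair : ∀ P Q : H →L[ℂ] H,
      (∀ x : H, normA A x = 1 →
        (‖innerA A (P x) x‖)^2 + (‖innerA A (Q x) x‖)^2 ≤ 2 * M^2) →
      (wA A P)^2 + (cA A Q)^2 ≤ 2 * M^2 := by
    intro P Q hPQ
    set c : ℝ := cA A Q with hc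
    have hc0 : 0 ≤ c := Real.sInf_nonneg (by rintro r ⟨x, hx, rfl⟩; exact norm_nonneg _)
    have hcle : ∀ x : H, normA A x = 1 → c ≤ ‖innerA A (Q x) x‖ := by
      intro x hx
      exact csInf_le ⟨0, by rintro r ⟨z, hz, rfl⟩; exact norm_nonneg _⟩ ⟨x, hx, rfl⟩
    have hkey : ∀ x : H, normA A x = 1 →
        (‖innerA A (P x) x‖)^2 ≤ 2 * M^2 - c^2 := by
      intro x hx
      have h1 := hPQ x hx
      have h2 : c^2 ≤ (‖innerA A (Q x) x‖)^2 :=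
        pow_le_pow_left₀ hc0 (hcle x hx) 2
      linarith
    have h2M : 0 ≤ 2 * M^2 - c^2 := by
      have := hkey x0 hx0
      have := sq_nonneg (‖innerA A (P x0) x0‖)
      linarith
    have hwle : wA A P ≤ Real.sqrt (2 * M^2 - c^2) := by
      apply Real.sSup_le _ (Real.sqrt_nonneg _)
      rintro r ⟨x, hx, rfl⟩
      exact (Real.le_sqrt (norm_nonneg _) h2M).mpr (hkey x hx)
    have hw0 : 0 ≤ wA A P :=
      Real.sSup_nonneg (by rintro r ⟨x, hx, rfl⟩; exact norm_nonneg _)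
    have hwsq : (wA A P)^2 ≤ 2 * M^2 - c^2 := by
      have := pow_le_pow_left₀ hw0 hwle 2
      rwa [Real.sq_sqrt h2M] at this
    linarith
  have h1 : (wA A (B + C))^2 + (cA A (B - C))^2 ≤ 2 * M^2 := by
    apply pair
    intro x hx
    exact hpar x hx
  have h2 : (wA A (B - C))^2 + (cA A (B + C))^2 ≤ 2 * M^2 := by
    apply pair
    intro x hx
    have := hpar x hx
    linarith
  have := max_le h1 h2
  linarith
end
end

section
/- Let B and C be A-selfadjoint bounded linear operators on H. Then (1/2)·max{ ‖B+C‖_A² + (c_A(B−C))², ‖B−C‖_A² + (c_A(B+C))² } ≤ (w_{A,e}(B,C))². -/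
noncomputable section

open scoped ComplexInnerProductSpace

variable {H : Type*} [NormedAddCommGroup H] [InnerProductSpace ℂ H] [CompleteSpace H]

section AuxProof
open ContinuousLinearMap


set_option synthInstance.maxHeartbeats 1000000 in
lemma sqrtA_exists (A : H →L[ℂ] H) (hA : A.IsPositive) :
    ∃ R : H →L[ℂ] H, IsSelfAdjoint R ∧ ∀ x, A x = R (R x) := by
  have h0 : (0 : H →L[ℂ] H) ≤ A := (ContinuousLinearMap.nonneg_iff_isPositive A).mpr hA
  set R := CFC.sqrt A with hR
  have hmul : R * R = A := CFC.sqrt_mul_sqrt_self A h0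
  refine ⟨R, ((ContinuousLinearMap.nonneg_iff_isPositive _).mp (CFC.sqrt_nonneg A)).isSelfAdjoint, ?_⟩
  intro x; rw [← hmul]; rfl

lemma Rsym {R : H →L[ℂ] H} (hR : IsSelfAdjoint R) (x y : H) : ⟪R x, y⟫ = ⟪x, R y⟫ :=
  (ContinuousLinearMap.isSelfAdjoint_iff_isSymmetric.mp hR) x y

lemma intertwine_pow {A T : H →L[ℂ] H} (hT : A.comp T = (adjoint T).comp A) (n : ℕ) :
    A.comp (T^n) = (adjoint (T^n)).comp A := by
  have hT' : A * T = star T * A := by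
    rw [ContinuousLinearMap.star_eq_adjoint]; exact hT
  have : A * T^n = star (T^n) * A := by
    induction n with
    | zero => simp
    | succ n ih =>
      rw [pow_succ, ← mul_assoc, ih, mul_assoc, hT', ← mul_assoc, ← star_mul, ← pow_succ]; rw [pow_succ']
  rw [← ContinuousLinearMap.star_eq_adjoint]; exact this

lemma core_step {A R T : H →L[ℂ] H} (hR : IsSelfAdjoint R) (hRA : ∀ x, A x = R (R x))
    (hT : ∀ z, A (T z) = (adjoint T) (A z)) (x : H) :
    ‖R (T x)‖^2 ≤ ‖R x‖ * ‖R (T (T x))‖ := by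
  have h1 : (‖R (T x)‖:ℝ)^2 = Complex.re ⟪R (T x), R (T x)⟫ := by
    rw [← RCLike.re_to_complex, inner_self_eq_norm_sq (𝕜 := ℂ)]
  have h2 : ⟪R (T x), R (T x)⟫ = ⟪R (T (T x)), R x⟫ := by
    rw [Rsym hR, ← hRA, hT, ContinuousLinearMap.adjoint_inner_right, hRA, ← Rsym hR]
  rw [h1, h2, ← RCLike.re_to_complex]
  calc RCLike.re ⟪R (T (T x)), R x⟫ ≤ ‖R (T (T x))‖ * ‖R x‖ := re_inner_le_norm _ _
    _ = ‖R x‖ * ‖R (T (T x))‖ := mul_comm _ _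

lemma pow_ineq {A R T : H →L[ℂ] H} (hR : IsSelfAdjoint R) (hRA : ∀ x, A x = R (R x))
    (hT : A.comp T = (adjoint T).comp A) (n : ℕ) (x : H) :
    ‖R (T x)‖^(2^n) ≤ ‖R x‖^(2^n - 1) * ‖R ((T^(2^n)) x)‖ := by
  induction n with
  | zero => simp
  | succ n ih =>
    have hk : 1 ≤ 2^n := Nat.one_le_two_pow
    have hptw : ∀ z, A ((T^(2^n)) z) = (adjoint (T^(2^n))) (A z) := by
      intro z
      have := intertwine_pow hT (2^n)
      exact ContinuousLinearMap.ext_iff.mp this z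
    have hcore := core_step hR hRA hptw x
    have hsq : (‖R (T x)‖^(2^n))^2 ≤ (‖R x‖^(2^n - 1) * ‖R ((T^(2^n)) x)‖)^2 :=
      pow_le_pow_left₀ (pow_nonneg (norm_nonneg _) _) ih 2
    have hTT : (T^(2^n)) ((T^(2^n)) x) = (T^(2^(n+1))) x := by
      rw [pow_succ, pow_mul, sq]; rfl
    calc ‖R (T x)‖^(2^(n+1)) = (‖R (T x)‖^(2^n))^2 := by
          rw [← pow_mul]
          congr 1
      _ ≤ (‖R x‖^(2^n - 1))^2 * ‖R ((T^(2^n)) x)‖^2 := by rw [mul_pow] at hsq; exact hsq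
      _ ≤ (‖R x‖^(2^n - 1))^2 * (‖R x‖ * ‖R ((T^(2^n)) ((T^(2^n)) x))‖) := by
          exact mul_le_mul_of_nonneg_left hcore (by positivity)
      _ = ‖R x‖^(2^(n+1) - 1) * ‖R ((T^(2^(n+1))) x)‖ := by
          rw [hTT, ← pow_mul, ← mul_assoc, ← pow_succ]
          congr 2
          omega

lemma normA_le_s14 {A R T : H →L[ℂ] H} (hR : IsSelfAdjoint R) (hRA : ∀ x, A x = R (R x))
    (hT : A.comp T = (adjoint T).comp A) (x : H) :
    ‖R (T x)‖ ≤ ‖T‖ * ‖R x‖ := by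
  by_contra hcon
  push_neg at hcon
  set a := ‖R (T x)‖ with ha
  set b := ‖R x‖ with hb
  have ha0 : 0 < a := lt_of_le_of_lt (by positivity) hcon
  have hTne : T ≠ 0 := by
    rintro rfl
    have : a = 0 := by simp [ha]
    linarith
  have hT0 : 0 < ‖T‖ := norm_pos_iff.mpr hTne
  have hbound : ∀ n : ℕ, a^(2^n) ≤ b^(2^n - 1) * (‖R‖ * ‖T‖^(2^n) * ‖x‖) := by
    intro n
    refine le_trans (pow_ineq hR hRA hT n x) ?_
    have h1 : ‖R ((T^(2^n)) x)‖ ≤ ‖R‖ * ‖T‖^(2^n) * ‖x‖ := by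
      calc ‖R ((T^(2^n)) x)‖ ≤ ‖R‖ * ‖(T^(2^n)) x‖ := R.le_opNorm _
        _ ≤ ‖R‖ * (‖T^(2^n)‖ * ‖x‖) := by
            exact mul_le_mul_of_nonneg_left ((T^(2^n)).le_opNorm x) (norm_nonneg R)
        _ ≤ ‖R‖ * (‖T‖^(2^n) * ‖x‖) := by
            refine mul_le_mul_of_nonneg_left ?_ (norm_nonneg R)
            exact mul_le_mul_of_nonneg_right (norm_pow_le' T (by positivity)) (norm_nonneg x)
        _ = ‖R‖ * ‖T‖^(2^n) * ‖x‖ := by ring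
    exact mul_le_mul_of_nonneg_left h1 (by positivity)
  rcases eq_or_lt_of_le (norm_nonneg (R x) : (0:ℝ) ≤ b) with hb0 | hb0
  · have h1 := hbound 1
    have hb0' : b = 0 := by rw [hb, ← hb0]
    rw [hb0'] at h1
    norm_num at h1
    nlinarith
  · -- b > 0
    set c := ‖T‖ * b with hc
    have hc0 : 0 < c := by positivity
    have hr1 : 1 < a / c := (one_lt_div hc0).mpr hcon
    obtain ⟨n, hn⟩ := pow_unbounded_of_one_lt (‖R‖ * ‖x‖ / b) hr1
    have hn2 : ‖R‖ * ‖x‖ / b < (a / c)^(2^n) :=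
      lt_of_lt_of_le hn (pow_le_pow_right₀ hr1.le (Nat.le_of_lt (Nat.lt_two_pow_self (n := n))))
    have hkey : c^(2^n) * (‖R‖ * ‖x‖ / b) = b^(2^n - 1) * (‖R‖ * ‖T‖^(2^n) * ‖x‖) := by
      have h2 : b^(2^n : ℕ) = b^(2^n - 1) * b := by
        rw [← pow_succ]; congr 1; have := Nat.one_le_two_pow (n := n); omega
      rw [hc, mul_pow, h2]
      have hb' : b ≠ 0 := ne_of_gt hb0
      field_simp
    have hlt : c^(2^n) * (‖R‖ * ‖x‖ / b) < a^(2^n) := by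
      have hdiv : ‖R‖ * ‖x‖ / b < a^(2^n) / c^(2^n) := by rw [← div_pow]; exact hn2
      rw [lt_div_iff₀ (by positivity)] at hdiv
      rw [mul_comm]
      exact hdiv
    have := hbound n
    rw [← hkey] at this
    linarith

lemma exists_unit {A R : H →L[ℂ] H} (hRA : ∀ x, A x = R (R x)) (hA0 : A ≠ 0) :
    ∃ x : H, ‖R x‖ = 1 := by
  have hR0 : ∃ z, R z ≠ 0 := by
    by_contra h
    push_neg at h
    apply hA0
    ext z
    simp [hRA z, h]
  obtain ⟨z, hz⟩ := hR0
  have hzn : (0:ℝ) < ‖R z‖ := norm_pos_iff.mpr hz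
  refine ⟨((‖R z‖:ℝ)⁻¹ : ℂ) • z, ?_⟩
  rw [map_smul, norm_smul]
  simp [abs_of_nonneg (le_of_lt hzn)]
  field_simp

lemma cplx_par (a b : ℂ) : ‖a+b‖^2 + ‖a-b‖^2
    = 2*(‖a‖^2 + ‖b‖^2) := by
  simp only [Complex.sq_norm, Complex.normSq_apply, Complex.add_re, Complex.add_im,
    Complex.sub_re, Complex.sub_im]
  ring


set_option maxHeartbeats 2000000 in
lemma side (A : H →L[ℂ] H) (hA : A.IsPositive) (hA0 : A ≠ 0)
    (B C : H →L[ℂ] H)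
    (hB : A.comp B = (adjoint B).comp A)
    (hC : A.comp C = (adjoint C).comp A) :
    (opNormA A (B + C))^2 + (cA A (B - C))^2 ≤ 2 * (wAe A B C)^2 := by
  obtain ⟨R, hR, hRA⟩ := sqrtA_exists A hA
  have hinner : ∀ (T : H →L[ℂ] H) (x : H), innerA A (T x) x = ⟪R x, R (T x)⟫ := by
    intro T x
    rw [innerA, hRA, ← Rsym hR]
  have hnormA : ∀ x : H, normA A x = ‖R x‖ := by
    intro x
    rw [normA, innerA, hRA, ← Rsym hR, ← RCLike.re_to_complex, inner_self_eq_norm_sq (𝕜 := ℂ)]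
    exact Real.sqrt_sq (norm_nonneg _)
  have hS : A.comp (B + C) = (adjoint (B + C)).comp A := by
    rw [map_add, ContinuousLinearMap.comp_add, ContinuousLinearMap.add_comp, hB, hC]
  have hD : A.comp (B - C) = (adjoint (B - C)).comp A := by
    rw [map_sub, ContinuousLinearMap.comp_sub, ContinuousLinearMap.sub_comp, hB, hC]
  set w := wAe A B C with hwdef
  -- bounds
  have habs : ∀ (T : H →L[ℂ] H), (∀ z, ‖R (T z)‖ ≤ ‖T‖ * ‖R z‖) →
      ∀ x, ‖R x‖ = 1 → ‖⟪R x, R (T x)⟫‖ ≤ ‖T‖ := by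
    intro T hT x hx
    have h := hT x
    have h2 := norm_inner_le_norm (𝕜 := ℂ) (R x) (R (T x))
    rw [hx, mul_one] at h
    rw [hx, one_mul] at h2
    linarith
  have hbdd : BddAbove {r : ℝ | ∃ x : H, normA A x = 1 ∧
      r = Real.sqrt ((‖innerA A (B x) x‖)^2 + (‖innerA A (C x) x‖)^2)} := by
    refine ⟨Real.sqrt (‖B‖^2 + ‖C‖^2), ?_⟩
    rintro r ⟨x, hx, rfl⟩
    rw [hnormA] at hx
    rw [hinner, hinner]
    apply Real.sqrt_le_sqrt
    have h1 := habs B (normA_le_s14 hR hRA hB) x hx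
    have h2 := habs C (normA_le_s14 hR hRA hC) x hx
    have a1 : (0:ℝ) ≤ ‖⟪R x, R (B x)⟫‖ := norm_nonneg _
    have a2 : (0:ℝ) ≤ ‖⟪R x, R (C x)⟫‖ := norm_nonneg _
    nlinarith
  have hw0 : 0 ≤ w := by
    rw [hwdef, wAe]
    apply Real.sSup_nonneg
    rintro r ⟨x, hx, rfl⟩
    positivity
  have hwmem : ∀ x, ‖R x‖ = 1 →
      Real.sqrt ((‖⟪R x, R (B x)⟫‖)^2 + (‖⟪R x, R (C x)⟫‖)^2) ≤ w := by
    intro x hx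
    rw [hwdef, wAe]
    apply le_csSup hbdd
    exact ⟨x, by rw [hnormA]; exact hx, by rw [hinner, hinner]⟩
  have hc0 : 0 ≤ cA A (B - C) := by
    rw [cA]
    apply Real.sInf_nonneg
    rintro r ⟨x, hx, rfl⟩
    positivity
  have hcle : ∀ x, ‖R x‖ = 1 → cA A (B - C) ≤ ‖⟪R x, R ((B - C) x)⟫‖ := by
    intro x hx
    have hmem : ‖innerA A ((B - C) x) x‖ ∈ {r : ℝ | ∃ y : H, normA A y = 1 ∧
        r = ‖innerA A ((B - C) y) y‖} := ⟨x, by rw [hnormA]; exact hx, rfl⟩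
    have hlb : BddBelow {r : ℝ | ∃ y : H, normA A y = 1 ∧
        r = ‖innerA A ((B - C) y) y‖} := by
      refine ⟨0, ?_⟩
      rintro r ⟨y, hy, rfl⟩
      positivity
    have := csInf_le hlb hmem
    rw [cA]
    rwa [hinner] at this
  have hpar : ∀ x : H, (‖⟪R x, R ((B + C) x)⟫‖)^2 + (‖⟪R x, R ((B - C) x)⟫‖)^2
      = 2*((‖⟪R x, R (B x)⟫‖)^2 + (‖⟪R x, R (C x)⟫‖)^2) := by
    intro x
    have h1 : ⟪R x, R ((B + C) x)⟫ = ⟪R x, R (B x)⟫ + ⟪R x, R (C x)⟫ := by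
      rw [ContinuousLinearMap.add_apply, map_add, inner_add_right]
    have h2 : ⟪R x, R ((B - C) x)⟫ = ⟪R x, R (B x)⟫ - ⟪R x, R (C x)⟫ := by
      rw [ContinuousLinearMap.sub_apply, map_sub, inner_sub_right]
    rw [h1, h2]
    exact cplx_par _ _
  have hkey : ∀ x, ‖R x‖ = 1 →
      (‖⟪R x, R ((B + C) x)⟫‖)^2 + (cA A (B - C))^2 ≤ 2*w^2 := by
    intro x hx
    have h1 := hwmem x hx
    have h2 : (‖⟪R x, R (B x)⟫‖)^2 + (‖⟪R x, R (C x)⟫‖)^2 ≤ w^2 := by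
      have e := Real.sq_sqrt (show (0:ℝ) ≤ (‖⟪R x, R (B x)⟫‖)^2
        + (‖⟪R x, R (C x)⟫‖)^2 by positivity)
      nlinarith [Real.sqrt_nonneg ((‖⟪R x, R (B x)⟫‖)^2 + (‖⟪R x, R (C x)⟫‖)^2)]
    have h3 := hcle x hx
    have h4 : (cA A (B - C))^2 ≤ (‖⟪R x, R ((B - C) x)⟫‖)^2 := by nlinarith
    have h5 := hpar x
    linarith
  obtain ⟨x₀, hx₀⟩ := exists_unit hRA hA0
  have h2w : (cA A (B - C))^2 ≤ 2*w^2 := by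
    have h6 : (0:ℝ) ≤ (‖⟪R x₀, R ((B + C) x₀)⟫‖)^2 := by positivity
    linarith [hkey x₀ hx₀]
  set M := Real.sqrt (2*w^2 - (cA A (B - C))^2) with hMdef
  have hM0 : 0 ≤ M := Real.sqrt_nonneg _
  have hM2 : M^2 = 2*w^2 - (cA A (B - C))^2 := Real.sq_sqrt (by linarith)
  have hsM : ∀ x, ‖R x‖ = 1 → ‖⟪R x, R ((B + C) x)⟫‖ ≤ M := by
    intro x hx
    have h1 : (‖⟪R x, R ((B + C) x)⟫‖)^2 ≤ M^2 := by
      rw [hM2]; linarith [hkey x hx]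
    calc ‖⟪R x, R ((B + C) x)⟫‖
        = Real.sqrt ((‖⟪R x, R ((B + C) x)⟫‖)^2) :=
          (Real.sqrt_sq (norm_nonneg _)).symm
      _ ≤ Real.sqrt (M^2) := Real.sqrt_le_sqrt h1
      _ = M := Real.sqrt_sq hM0
  have hquad : ∀ u : H, ‖⟪R u, R ((B + C) u)⟫‖ ≤ M * ‖R u‖^2 := by
    intro u
    rcases eq_or_ne (‖R u‖) 0 with h0 | h0
    · calc ‖(⟪R u, R ((B + C) u)⟫ : ℂ)‖ ≤ ‖R u‖ * ‖R ((B + C) u)‖ := norm_inner_le_norm _ _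
        _ = 0 := by rw [h0, zero_mul]
        _ ≤ M * ‖R u‖^2 := by positivity
    · have ht : 0 < ‖R u‖ := lt_of_le_of_ne (norm_nonneg _) (Ne.symm h0)
      set t := ‖R u‖ with htdef
      set v := ((t⁻¹ : ℝ) : ℂ) • u with hvdef
      have hvu : ‖R v‖ = 1 := by
        rw [hvdef, map_smul, norm_smul]
        simp only [Complex.norm_real, Real.norm_eq_abs, abs_of_nonneg (inv_nonneg.mpr ht.le)]
        rw [← htdef]
        field_simp
      have hscale : ‖⟪R v, R ((B + C) v)⟫‖
          = t⁻¹ * t⁻¹ * ‖⟪R u, R ((B + C) u)⟫‖ := by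
        rw [hvdef, map_smul, map_smul, map_smul, inner_smul_left, inner_smul_right, norm_mul, norm_mul,
          Complex.norm_conj, Complex.norm_real, Real.norm_eq_abs, abs_of_nonneg (inv_nonneg.mpr ht.le)]
        ring
      have h1 := hsM v hvu
      rw [hscale] at h1
      have h2 : t^2 * (t⁻¹ * t⁻¹ * ‖⟪R u, R ((B + C) u)⟫‖) ≤ t^2 * M :=
        mul_le_mul_of_nonneg_left h1 (sq_nonneg t)
      calc ‖⟪R u, R ((B + C) u)⟫‖
          = t^2 * (t⁻¹ * t⁻¹ * ‖⟪R u, R ((B + C) u)⟫‖) := by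
            field_simp
        _ ≤ t^2 * M := h2
        _ = M * t^2 := mul_comm _ _
  have hSpt : ∀ z, A ((B + C) z) = (adjoint (B + C)) (A z) := fun z =>
    ContinuousLinearMap.ext_iff.mp hS z
  have hsym : ∀ u v : H, ⟪R v, R ((B + C) u)⟫ = (starRingEnd ℂ) ⟪R u, R ((B + C) v)⟫ := by
    intro u v
    calc ⟪R v, R ((B + C) u)⟫ = ⟪v, R (R ((B + C) u))⟫ := Rsym hR v _
      _ = ⟪v, A ((B + C) u)⟫ := by rw [← hRA]
      _ = ⟪v, (adjoint (B + C)) (A u)⟫ := by rw [hSpt]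
      _ = ⟪(B + C) v, A u⟫ := ContinuousLinearMap.adjoint_inner_right _ _ _
      _ = ⟪(B + C) v, R (R u)⟫ := by rw [hRA]
      _ = ⟪R ((B + C) v), R u⟫ := (Rsym hR _ _).symm
      _ = (starRingEnd ℂ) ⟪R u, R ((B + C) v)⟫ := by rw [← inner_conj_symm]
  have hpolar : ∀ x y : H,
      Complex.re ⟪R (x + y), R ((B + C) (x + y))⟫ - Complex.re ⟪R (x - y), R ((B + C) (x - y))⟫
        = 4 * Complex.re ⟪R y, R ((B + C) x)⟫ := by
    intro x y
    have e1 : ⟪R (x + y), R ((B + C) (x + y))⟫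
        = ⟪R x, R ((B + C) x)⟫ + ⟪R x, R ((B + C) y)⟫
          + ⟪R y, R ((B + C) x)⟫ + ⟪R y, R ((B + C) y)⟫ := by
      rw [map_add (B + C), map_add R x y, map_add R ((B + C) x) ((B + C) y),
        inner_add_left, inner_add_right, inner_add_right]
      ring
    have e2 : ⟪R (x - y), R ((B + C) (x - y))⟫
        = ⟪R x, R ((B + C) x)⟫ - ⟪R x, R ((B + C) y)⟫
          - ⟪R y, R ((B + C) x)⟫ + ⟪R y, R ((B + C) y)⟫ := by
      rw [map_sub (B + C), map_sub R x y, map_sub R ((B + C) x) ((B + C) y),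
        inner_sub_left, inner_sub_right, inner_sub_right]
      ring
    rw [e1, e2, hsym y x]
    simp only [Complex.add_re, Complex.sub_re, Complex.conj_re]
    ring
  have hSnorm : ∀ x, ‖R x‖ = 1 → ‖R ((B + C) x)‖ ≤ M := by
    intro x hx
    rcases eq_or_ne (‖R ((B + C) x)‖) 0 with h0 | h0
    · rw [h0]; exact hM0
    · have hτ : 0 < ‖R ((B + C) x)‖ := lt_of_le_of_ne (norm_nonneg _) (Ne.symm h0)
      set τ := ‖R ((B + C) x)‖ with hτdef
      set y := ((τ⁻¹ : ℝ) : ℂ) • (B + C) x with hydef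
      have hyn : ‖R y‖ = 1 := by
        rw [hydef, map_smul, norm_smul]
        simp only [Complex.norm_real, Real.norm_eq_abs, abs_of_nonneg (inv_nonneg.mpr hτ.le)]
        rw [← hτdef]
        field_simp
      have hre : Complex.re ⟪R y, R ((B + C) x)⟫ = τ := by
        have hself : Complex.re ⟪R ((B + C) x), R ((B + C) x)⟫ = τ^2 := by
          rw [← RCLike.re_to_complex, inner_self_eq_norm_sq (𝕜 := ℂ), ← hτdef]
        rw [hydef, map_smul, inner_smul_left, Complex.conj_ofReal]
        simp only [Complex.mul_re, Complex.ofReal_re, Complex.ofReal_im, zero_mul, sub_zero]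
        rw [hself, sq]
        field_simp
      have b1 := hquad (x + y)
      have b2 := hquad (x - y)
      have habs1 : Complex.re ⟪R (x + y), R ((B + C) (x + y))⟫ ≤ M * ‖R (x + y)‖^2 :=
        le_trans (Complex.re_le_norm _) b1
      have habs2 : -(M * ‖R (x - y)‖^2) ≤ Complex.re ⟪R (x - y), R ((B + C) (x - y))⟫ := by
        have h5 := neg_abs_le (Complex.re ⟪R (x - y), R ((B + C) (x - y))⟫)
        have h6 : |Complex.re ⟪R (x - y), R ((B + C) (x - y))⟫|
            ≤ ‖⟪R (x - y), R ((B + C) (x - y))⟫‖ := Complex.abs_re_le_norm _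
        linarith
      have hpar2 : ‖R (x + y)‖^2 + ‖R (x - y)‖^2 = 4 := by
        rw [map_add, map_sub]
        have hp := parallelogram_law_with_norm ℂ (R x) (R y)
        rw [hx, hyn] at hp
        nlinarith [hp]
      have h4 : 4 * τ ≤ 4 * M := by
        have hp := hpolar x y
        rw [hre] at hp
        nlinarith [hp, habs1, habs2, hpar2, hM0, sq_nonneg (‖R (x+y)‖), sq_nonneg (‖R (x-y)‖)]
      linarith
  have hop : opNormA A (B + C) ≤ M := by
    rw [opNormA]
    apply Real.sSup_le
    · rintro r ⟨x, hx, rfl⟩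
      rw [hnormA] at hx
      rw [hnormA]
      exact hSnorm x hx
    · exact hM0
  have hop0 : 0 ≤ opNormA A (B + C) := by
    rw [opNormA]
    apply Real.sSup_nonneg
    rintro r ⟨x, hx, rfl⟩
    rw [normA]
    positivity
  have hfin : (opNormA A (B + C))^2 ≤ M^2 := by nlinarith
  rw [hM2] at hfin
  linarith


lemma wAe_neg (A B C : H →L[ℂ] H) : wAe A B (-C) = wAe A B C := by
  rw [wAe, wAe]
  congr 1
  ext r
  have habs : ∀ x : H, ‖innerA A ((-C) x) x‖ = ‖innerA A (C x) x‖ := by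
    intro x
    rw [innerA, innerA, ContinuousLinearMap.neg_apply, map_neg, inner_neg_right]
    exact norm_neg _
  constructor
  · rintro ⟨x, hx, hr⟩; exact ⟨x, hx, by rw [hr, habs x]⟩
  · rintro ⟨x, hx, hr⟩; exact ⟨x, hx, by rw [hr, habs x]⟩

end AuxProof

open ContinuousLinearMap in
theorem stmt14 (A : H →L[ℂ] H) (hA : A.IsPositive) (hA0 : A ≠ 0)
    (B C : H →L[ℂ] H)
    (hB : A.comp B = (ContinuousLinearMap.adjoint B).comp A)
    (hC : A.comp C = (ContinuousLinearMap.adjoint C).comp A) :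
    (1/2) * max ((opNormA A (B + C))^2 + (cA A (B - C))^2)
        ((opNormA A (B - C))^2 + (cA A (B + C))^2)
      ≤ (wAe A B C)^2 := by
  have hC' : A.comp (-C) = (adjoint (-C)).comp A := by
    rw [map_neg, ContinuousLinearMap.comp_neg, ContinuousLinearMap.neg_comp, hC]
  have h1 := side A hA hA0 B C hB hC
  have h2 := side A hA hA0 B (-C) hB hC'
  rw [sub_neg_eq_add, ← sub_eq_add_neg, wAe_neg] at h2
  have hmax : max ((opNormA A (B + C))^2 + (cA A (B - C))^2)
      ((opNormA A (B - C))^2 + (cA A (B + C))^2) ≤ 2 * (wAe A B C)^2 :=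
    max_le h1 h2
  linarith
end
end
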